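/- arXiv:1801.06570 — 2 statements merged into one kernel-verified Lean document; each statement's English description precedes it below -/
import Mathlib

section
/- Let {A_n} be a sequence of n×n symmetric matrices with nonnegative entries and zeros on the diagonal satisfying (BD) and (NT), and let (β₀, B₀) ∈ Θ. For x ∈ {-1,1}^n define A_{2,n} := {x : x_i m_i(x) = |m_i(x)| for all i ∈ [n]}, A_{3,n} := {x : x_i m_i(x) = -|m_i(x)| for all i ∈ [n]}, and A_{4,n} := {(1,…,1), (-1,…,-1)}. Then lim_{n→∞} P_{n,β₀,B₀}(A_{2,n}^c ∩ A_{3,n}^c ∩ A_{4,n}^c) = 1. -/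
open Filter

noncomputable section

/-- Spin configuration in `{-1,1}^n` encoded by a Boolean vector. -/
def spinVec (n : ℕ) (σ : Fin n → Bool) : Fin n → ℝ := fun i => if σ i then 1 else -1

/-- Local field `m_i(x) = ∑_j A i j * x j`. -/
def mloc {n : ℕ} (A : Matrix (Fin n) (Fin n) ℝ) (x : Fin n → ℝ) (i : Fin n) : ℝ :=
  ∑ j, A i j * x j

/-- Average local field `m̄(x)`. -/
def mbar {n : ℕ} (A : Matrix (Fin n) (Fin n) ℝ) (x : Fin n → ℝ) : ℝ :=
  (1 / (n : ℝ)) * ∑ i, mloc A x i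

/-- `T_n(x) = (1/n) ∑_i (m_i(x) - m̄(x))²`. -/
def Tstat {n : ℕ} (A : Matrix (Fin n) (Fin n) ℝ) (x : Fin n → ℝ) : ℝ :=
  (1 / (n : ℝ)) * ∑ i, (mloc A x i - mbar A x) ^ 2

/-- Unnormalized Ising weight `exp((β/2) xᵀAx + B ∑ x_i)`. -/
def isingWt {n : ℕ} (A : Matrix (Fin n) (Fin n) ℝ) (β B : ℝ) (x : Fin n → ℝ) : ℝ :=
  Real.exp (β / 2 * ∑ i, ∑ j, A i j * x i * x j + B * ∑ i, x i)

/-- Probability of the event `E` under the Ising measure `P_{n,β,B}`. -/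
def isingProb {n : ℕ} (A : Matrix (Fin n) (Fin n) ℝ) (β B : ℝ) (E : Set (Fin n → ℝ)) : ℝ :=
  (∑ σ : Fin n → Bool, E.indicator (isingWt A β B) (spinVec n σ)) /
    (∑ σ : Fin n → Bool, isingWt A β B (spinVec n σ))

/-- Expectation of `f` under the Ising measure `P_{n,β,B}`. -/
def isingExp {n : ℕ} (A : Matrix (Fin n) (Fin n) ℝ) (β B : ℝ) (f : (Fin n → ℝ) → ℝ) : ℝ :=
  (∑ σ : Fin n → Bool, f (spinVec n σ) * isingWt A β B (spinVec n σ)) /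
    (∑ σ : Fin n → Bool, isingWt A β B (spinVec n σ))

/-- Pseudo-likelihood equation `Q_n(β,B|x)`. -/
def Qfun {n : ℕ} (A : Matrix (Fin n) (Fin n) ℝ) (β B : ℝ) (x : Fin n → ℝ) : ℝ :=
  ∑ i, mloc A x i * (x i - Real.tanh (β * mloc A x i + B))

/-- Pseudo-likelihood equation `R_n(β,B|x)`. -/
def Rfun {n : ℕ} (A : Matrix (Fin n) (Fin n) ℝ) (β B : ℝ) (x : Fin n → ℝ) : ℝ :=
  ∑ i, (x i - Real.tanh (β * mloc A x i + B))

/-- `b_i(x) = tanh(β m_i(x) + B)`. -/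
def bvec {n : ℕ} (A : Matrix (Fin n) (Fin n) ℝ) (β B : ℝ) (x : Fin n → ℝ) : Fin n → ℝ :=
  fun i => Real.tanh (β * mloc A x i + B)

/-- `f_n(y) = (β/2) yᵀAy + B ∑ y_i`. -/
def fN {n : ℕ} (A : Matrix (Fin n) (Fin n) ℝ) (β B : ℝ) (y : Fin n → ℝ) : ℝ :=
  β / 2 * ∑ i, ∑ j, A i j * y i * y j + B * ∑ i, y i

/-- Entropy term `I(y)` (with `0 log 0 = 0`, as `Real.log 0 = 0`). -/
def entI {n : ℕ} (y : Fin n → ℝ) : ℝ :=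
  ∑ i, ((1 + y i) / 2 * Real.log ((1 + y i) / 2) + (1 - y i) / 2 * Real.log ((1 - y i) / 2))

lemma tanh_formula (t : ℝ) : Real.tanh t = 1 - 2/(Real.exp (2*t) + 1) := by
  rw [Real.tanh_eq_sinh_div_cosh, Real.sinh_eq, Real.cosh_eq]
  have h1 : Real.exp t * Real.exp (-t) = 1 := by rw [← Real.exp_add]; simp
  have h2 : Real.exp (2*t) = Real.exp t * Real.exp t := by rw [← Real.exp_add]; ring_nf
  have h3 : (0:ℝ) < Real.exp t + Real.exp (-t) := by positivity
  have h4 : (0:ℝ) < Real.exp (2*t) + 1 := by positivity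
  rw [h2] at h4 ⊢
  field_simp
  linear_combination (-2*Real.exp t) * h1

lemma tanh_lt_one' (t : ℝ) : Real.tanh t < 1 := by
  rw [tanh_formula]
  have : (0:ℝ) < 2/(Real.exp (2*t)+1) := by positivity
  linarith

lemma neg_one_lt_tanh' (t : ℝ) : -1 < Real.tanh t := by
  rw [tanh_formula]
  have h4 : (0:ℝ) < Real.exp (2*t) + 1 := by positivity
  have : 2/(Real.exp (2*t)+1) < 2 := by
    rw [div_lt_iff₀ h4]
    nlinarith [Real.exp_pos (2*t)]
  linarith

lemma abs_tanh_le_one (t : ℝ) : |Real.tanh t| ≤ 1 := by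
  rw [abs_le]; constructor
  · linarith [neg_one_lt_tanh' t]
  · linarith [tanh_lt_one' t]

lemma tanh_mono' {a b : ℝ} (h : a ≤ b) : Real.tanh a ≤ Real.tanh b := by
  rw [tanh_formula, tanh_formula]
  have ha : (0:ℝ) < Real.exp (2*a) + 1 := by positivity
  have hb : (0:ℝ) < Real.exp (2*b) + 1 := by positivity
  have : Real.exp (2*a) ≤ Real.exp (2*b) := Real.exp_le_exp.mpr (by linarith)
  have h2 : 2/(Real.exp (2*b)+1) ≤ 2/(Real.exp (2*a)+1) := by
    apply div_le_div_of_nonneg_left (by norm_num) ha (by linarith)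
  linarith

lemma tanh_strict_pos {t : ℝ} (h : 0 < t) : 0 < Real.tanh t := by
  rw [tanh_formula]
  have h1 : (1:ℝ) < Real.exp (2*t) := by
    rw [show (1:ℝ) = Real.exp 0 by simp]; exact Real.exp_lt_exp.mpr (by linarith)
  have h4 : (0:ℝ) < Real.exp (2*t) + 1 := by positivity
  have : 2/(Real.exp (2*t)+1) < 1 := by rw [div_lt_iff₀ h4]; linarith
  linarith

lemma tanh_neg' (t : ℝ) : Real.tanh (-t) = - Real.tanh t := by
  rw [Real.tanh_eq_sinh_div_cosh, Real.tanh_eq_sinh_div_cosh, Real.sinh_neg, Real.cosh_neg, neg_div]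

lemma abs_tanh_pos {t : ℝ} (h : t ≠ 0) : 0 < |Real.tanh t| := by
  rcases lt_or_gt_of_ne h with h' | h'
  · have := tanh_strict_pos (t := -t) (by linarith)
    rw [tanh_neg'] at this
    rw [abs_of_neg (by linarith)]; linarith
  · rw [abs_of_pos (tanh_strict_pos h')]; exact tanh_strict_pos h'

lemma abs_tanh_le_tanh {y Y : ℝ} (h : |y| ≤ Y) : |Real.tanh y| ≤ Real.tanh Y := by
  rw [abs_le] at h
  rw [abs_le]; constructor
  · have := tanh_mono' (a := -Y) (b := y) (by linarith)
    rw [tanh_neg'] at this; linarith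
  · exact tanh_mono' h.2

lemma exp_sub_one_le (s : ℝ) (hs : 0 ≤ s) : Real.exp s - 1 ≤ s * Real.exp s := by
  have h := Real.add_one_le_exp (-s)
  have h2 := Real.exp_pos s
  have h3 : Real.exp (-s) * Real.exp s = 1 := by rw [← Real.exp_add]; simp
  nlinarith

lemma tanh_lip (a b : ℝ) : |Real.tanh a - Real.tanh b| ≤ 4 * |a - b| := by
  have key : ∀ u v : ℝ, v ≤ u → Real.tanh u - Real.tanh v ≤ 4 * (u - v) := by
    intro u v huv
    rw [tanh_formula, tanh_formula]
    have hu : (0:ℝ) < Real.exp (2*u) + 1 := by positivity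
    have hv : (0:ℝ) < Real.exp (2*v) + 1 := by positivity
    have hd : Real.exp (2*u) - Real.exp (2*v) ≤ 2*(u-v) * Real.exp (2*u) := by
      have h1 : Real.exp (2*u) = Real.exp (2*(u-v)) * Real.exp (2*v) := by
        rw [← Real.exp_add]; ring_nf
      have h2 := exp_sub_one_le (2*(u-v)) (by linarith)
      have h3 := Real.exp_pos (2*v)
      have h4 := Real.exp_pos (2*(u-v))
      calc Real.exp (2*u) - Real.exp (2*v) = (Real.exp (2*(u-v)) - 1) * Real.exp (2*v) := by
            rw [h1]; ring
        _ ≤ (2*(u-v) * Real.exp (2*(u-v))) * Real.exp (2*v) := by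
            apply mul_le_mul_of_nonneg_right h2 (le_of_lt h3)
        _ = 2*(u-v) * Real.exp (2*u) := by rw [h1]; ring
    have expand : (1 - 2/(Real.exp (2*u)+1)) - (1 - 2/(Real.exp (2*v)+1))
        = 2*(Real.exp (2*u) - Real.exp (2*v))/((Real.exp (2*u)+1)*(Real.exp (2*v)+1)) := by
      field_simp; ring
    rw [expand]
    rw [div_le_iff₀ (by positivity)]
    have h5 := Real.exp_pos (2*u)
    have h6 := Real.exp_pos (2*v)
    nlinarith [mul_nonneg (mul_nonneg (by linarith : (0:ℝ) ≤ 2*(u-v)) h5.le) h6.le,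
      mul_nonneg (by linarith : (0:ℝ) ≤ 2*(u-v)) h5.le]
  rcases le_total b a with h | h
  · rw [abs_of_nonneg (by linarith [tanh_mono' h] : (0:ℝ) ≤ Real.tanh a - Real.tanh b),
      abs_of_nonneg (by linarith : (0:ℝ) ≤ a - b)]
    exact key a b h
  · rw [abs_of_nonpos (by linarith [tanh_mono' h] : Real.tanh a - Real.tanh b ≤ 0),
      abs_of_nonpos (by linarith : a - b ≤ 0)]
    have := key b a h
    linarith

def flipB {n : ℕ} (i : Fin n) (σ : Fin n → Bool) : Fin n → Bool := Function.update σ i (!σ i)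

lemma flipB_invol {n : ℕ} (i : Fin n) : Function.Involutive (flipB i) := by
  intro σ
  funext j
  by_cases h : j = i
  · subst h; simp [flipB]
  · simp [flipB, Function.update_of_ne h]

lemma spin_flip {n : ℕ} (i : Fin n) (σ : Fin n → Bool) :
    spinVec n (flipB i σ) = fun j => spinVec n σ j + (if j = i then -(2 * spinVec n σ j) else 0) := by
  funext j
  by_cases h : j = i
  · subst h; simp only [spinVec, flipB, Function.update_self, if_pos rfl]
    cases hh : σ j <;> simp [hh] <;> norm_num
  · simp [spinVec, flipB, Function.update_of_ne h, h]

lemma spin_cases {n : ℕ} (σ : Fin n → Bool) (j : Fin n) :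
    spinVec n σ j = 1 ∨ spinVec n σ j = -1 := by
  cases h : σ j <;> simp [spinVec, h]

lemma abs_spin {n : ℕ} (σ : Fin n → Bool) (j : Fin n) : |spinVec n σ j| = 1 := by
  rcases spin_cases σ j with h | h <;> rw [h] <;> norm_num

lemma sum_ite_split {n : ℕ} (i : Fin n) (f : Fin n → ℝ) (a : ℝ) :
    (∑ j, if j = i then a else f j) = a - f i + ∑ j, f j := by
  have : ∀ j, (if j = i then a else f j) = (if j = i then a - f j else 0) + f j := by
    intro j; by_cases h : j = i <;> simp [h]
  rw [Finset.sum_congr rfl (fun j _ => this j), Finset.sum_add_distrib, Finset.sum_ite_eq']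
  simp

lemma mloc_flip {n : ℕ} (A : Matrix (Fin n) (Fin n) ℝ) (i : Fin n) (σ : Fin n → Bool) (k : Fin n) :
    mloc A (spinVec n (flipB i σ)) k = mloc A (spinVec n σ) k - 2 * A k i * spinVec n σ i := by
  rw [spin_flip]
  unfold mloc
  have : ∀ j, A k j * (spinVec n σ j + (if j = i then -(2 * spinVec n σ j) else 0))
      = A k j * spinVec n σ j + (if j = i then -(2 * A k j * spinVec n σ j) else 0) := by
    intro j; by_cases h : j = i <;> simp [h] <;> ring
  rw [Finset.sum_congr rfl (fun j _ => this j), Finset.sum_add_distrib, Finset.sum_ite_eq']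
  simp; ring

lemma mloc_flip_self {n : ℕ} (A : Matrix (Fin n) (Fin n) ℝ) (hdiag : ∀ i, A i i = 0)
    (i : Fin n) (σ : Fin n → Bool) :
    mloc A (spinVec n (flipB i σ)) i = mloc A (spinVec n σ) i := by
  rw [mloc_flip, hdiag]; ring

lemma sum_spin_flip {n : ℕ} (i : Fin n) (σ : Fin n → Bool) :
    ∑ j, spinVec n (flipB i σ) j = (∑ j, spinVec n σ j) - 2 * spinVec n σ i := by
  rw [spin_flip]
  rw [Finset.sum_add_distrib, Finset.sum_ite_eq']
  simp; ring

lemma quad_eq {n : ℕ} (A : Matrix (Fin n) (Fin n) ℝ) (z : Fin n → ℝ) :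
    ∑ j, ∑ k, A j k * z j * z k = ∑ j, z j * mloc A z j := by
  apply Finset.sum_congr rfl
  intro j _
  rw [mloc, Finset.mul_sum]
  apply Finset.sum_congr rfl
  intro k _; ring

lemma col_eq_row {n : ℕ} (A : Matrix (Fin n) (Fin n) ℝ) (hs : A.IsSymm) (x : Fin n → ℝ) (i : Fin n) :
    ∑ j, A j i * x j = mloc A x i := by
  unfold mloc
  apply Finset.sum_congr rfl
  intro j _
  rw [hs.apply i j]

lemma quad_flip {n : ℕ} (A : Matrix (Fin n) (Fin n) ℝ) (hs : A.IsSymm) (hdiag : ∀ i, A i i = 0)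
    (i : Fin n) (σ : Fin n → Bool) :
    ∑ j, ∑ k, A j k * spinVec n (flipB i σ) j * spinVec n (flipB i σ) k
      = (∑ j, ∑ k, A j k * spinVec n σ j * spinVec n σ k)
        - 4 * spinVec n σ i * mloc A (spinVec n σ) i := by
  set x := spinVec n σ with hx
  rw [quad_eq, quad_eq]
  have hterm : ∀ j, spinVec n (flipB i σ) j * mloc A (spinVec n (flipB i σ)) j
      = x j * mloc A x j + (if j = i then -(2 * x i * mloc A x i)
          else -(2 * A j i * x j * x i)) := by
    intro j
    rw [mloc_flip, spin_flip]
    by_cases h : j = i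
    · subst h; simp only [if_pos rfl]; rw [hdiag]; push_cast; simp; ring
    · simp only [if_neg h]; ring
  rw [Finset.sum_congr rfl (fun j _ => hterm j), Finset.sum_add_distrib]
  have : (∑ j, if j = i then -(2 * x i * mloc A x i) else -(2 * A j i * x j * x i))
      = -(2 * x i * mloc A x i) - (-(2 * A i i * x i * x i)) + ∑ j, -(2 * A j i * x j * x i) := by
    exact sum_ite_split i _ _
  rw [this, hdiag]
  have h2 : ∑ j, -(2 * A j i * x j * x i) = -(2 * x i * mloc A x i) := by
    rw [← col_eq_row A hs x i, Finset.mul_sum, ← Finset.sum_neg_distrib]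
    apply Finset.sum_congr rfl
    intro j _; ring
  rw [h2]; ring

lemma wt_flip {n : ℕ} (A : Matrix (Fin n) (Fin n) ℝ) (hs : A.IsSymm) (hdiag : ∀ i, A i i = 0)
    (β B : ℝ) (i : Fin n) (σ : Fin n → Bool) :
    isingWt A β B (spinVec n (flipB i σ))
      = isingWt A β B (spinVec n σ)
        * Real.exp (-(2 * spinVec n σ i * (β * mloc A (spinVec n σ) i + B))) := by
  unfold isingWt
  rw [quad_flip A hs hdiag, sum_spin_flip, ← Real.exp_add]
  congr 1
  ring

def gB {n : ℕ} (A : Matrix (Fin n) (Fin n) ℝ) (β B : ℝ) (i : Fin n) (σ : Fin n → Bool) : ℝ :=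
  spinVec n σ i - Real.tanh (β * mloc A (spinVec n σ) i + B)

def TB {n : ℕ} (A : Matrix (Fin n) (Fin n) ℝ) (β B : ℝ)
    (h : Fin n → (Fin n → Bool) → ℝ) (σ : Fin n → Bool) : ℝ :=
  ∑ i, h i σ * gB A β B i σ

lemma spin_flip_self {n : ℕ} (i : Fin n) (σ : Fin n → Bool) :
    spinVec n (flipB i σ) i = -(spinVec n σ i) := by
  rw [spin_flip]; simp; ring

lemma g_flip_self {n : ℕ} (A : Matrix (Fin n) (Fin n) ℝ) (hdiag : ∀ i, A i i = 0)
    (β B : ℝ) (i : Fin n) (σ : Fin n → Bool) :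
    gB A β B i (flipB i σ)
      = -(spinVec n σ i) - Real.tanh (β * mloc A (spinVec n σ) i + B) := by
  unfold gB
  rw [spin_flip_self, mloc_flip_self A hdiag]

lemma pair_zero {s θ : ℝ} (hσ : s = 1 ∨ s = -1) :
    (s - Real.tanh θ) + Real.exp (-(2*s*θ)) * (-s - Real.tanh θ) = 0 := by
  have h1 : Real.exp (-(2*θ)) * Real.exp (2*θ) = 1 := by rw [← Real.exp_add]; simp
  have h4 : (0:ℝ) < Real.exp (2*θ) + 1 := by positivity
  rcases hσ with h | h <;> subst h
  · rw [show (-(2*(1:ℝ)*θ)) = -(2*θ) by ring]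
    have key : (1:ℝ) - Real.tanh θ + Real.exp (-(2*θ)) * (-1 - Real.tanh θ)
        = (2 - 2*(Real.exp (-(2*θ)) * Real.exp (2*θ)))/(Real.exp (2*θ)+1) := by
      rw [tanh_formula θ]; field_simp; ring
    rw [key, h1]; norm_num
  · rw [show (-(2*(-1:ℝ)*θ)) = 2*θ by ring]
    rw [tanh_formula θ]; field_simp; ring

lemma center {n : ℕ} (A : Matrix (Fin n) (Fin n) ℝ) (hs : A.IsSymm) (hdiag : ∀ i, A i i = 0)
    (β B : ℝ) (i : Fin n) (H : (Fin n → Bool) → ℝ) (hH : ∀ σ, H (flipB i σ) = H σ) :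
    ∑ σ : Fin n → Bool, H σ * (isingWt A β B (spinVec n σ) * gB A β B i σ) = 0 := by
  set F : (Fin n → Bool) → ℝ :=
    fun σ => H σ * (isingWt A β B (spinVec n σ) * gB A β B i σ) with hF
  have hpt : ∀ σ, F σ + F (flipB i σ) = 0 := by
    intro σ
    have hw := wt_flip A hs hdiag β B i σ
    have hg := g_flip_self A hdiag β B i σ
    have hz := pair_zero (s := spinVec n σ i) (θ := β * mloc A (spinVec n σ) i + B)
      (spin_cases σ i)
    have hFf : F (flipB i σ) = H σ * (isingWt A β B (spinVec n σ)
        * Real.exp (-(2 * spinVec n σ i * (β * mloc A (spinVec n σ) i + B)))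
        * (-(spinVec n σ i) - Real.tanh (β * mloc A (spinVec n σ) i + B))) := by
      show H (flipB i σ) * (isingWt A β B (spinVec n (flipB i σ)) * gB A β B i (flipB i σ)) = _
      rw [hH, hw, hg]
    have hFs : F σ = H σ * (isingWt A β B (spinVec n σ)
        * (spinVec n σ i - Real.tanh (β * mloc A (spinVec n σ) i + B))) := by
      show H σ * (isingWt A β B (spinVec n σ) * gB A β B i σ) = _
      rw [gB]
    rw [hFs, hFf]
    linear_combination (H σ * isingWt A β B (spinVec n σ)) * hz
  have hinv := flipB_invol (n := n) i
  have hsum : ∑ σ, F σ = ∑ σ, F (flipB i σ) := by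
    exact (Equiv.sum_comp hinv.toPerm F).symm
  have : (2:ℝ) * ∑ σ, F σ = ∑ σ, (F σ + F (flipB i σ)) := by
    rw [Finset.sum_add_distrib, ← hsum]; ring
  have h0 : ∑ σ, (F σ + F (flipB i σ)) = 0 := by
    apply Finset.sum_eq_zero; intro σ _; exact hpt σ
  have := this.trans h0
  linarith

lemma abs_g_le {n : ℕ} (A : Matrix (Fin n) (Fin n) ℝ) (β B : ℝ) (i : Fin n) (σ : Fin n → Bool) :
    |gB A β B i σ| ≤ 2 := by
  unfold gB
  have h1 := abs_spin σ i
  have h2 := abs_tanh_le_one (β * mloc A (spinVec n σ) i + B)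
  calc |spinVec n σ i - Real.tanh (β * mloc A (spinVec n σ) i + B)|
      ≤ |spinVec n σ i| + |Real.tanh (β * mloc A (spinVec n σ) i + B)| := abs_sub _ _
    _ ≤ 2 := by rw [h1]; linarith

lemma variance_bound {n : ℕ} (A : Matrix (Fin n) (Fin n) ℝ) (hs : A.IsSymm)
    (hdiag : ∀ i, A i i = 0) (β B : ℝ) (h : Fin n → (Fin n → Bool) → ℝ) (M D : ℝ)
    (hM : ∀ i σ, |h i σ| ≤ M)
    (hinv : ∀ i σ, h i (flipB i σ) = h i σ)
    (hD : ∀ i σ, |TB A β B h σ - TB A β B h (flipB i σ)| ≤ D) :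
    ∑ σ : Fin n → Bool, isingWt A β B (spinVec n σ) * (TB A β B h σ)^2
      ≤ n * (M * D) * ∑ σ : Fin n → Bool, isingWt A β B (spinVec n σ) := by
  set w : (Fin n → Bool) → ℝ := fun σ => isingWt A β B (spinVec n σ) with hw
  have hwpos : ∀ σ, 0 < w σ := fun σ => Real.exp_pos _
  set Z := ∑ σ : Fin n → Bool, w σ with hZ
  have hswap : ∑ σ : Fin n → Bool, w σ * (TB A β B h σ)^2
      = ∑ i : Fin n, ∑ σ : Fin n → Bool, w σ * (h i σ * gB A β B i σ) * TB A β B h σ := by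
    rw [Finset.sum_comm]
    apply Finset.sum_congr rfl
    intro σ _
    rw [pow_two, TB, Finset.sum_mul, Finset.mul_sum]
    apply Finset.sum_congr rfl
    intro i _
    ring
  rw [hswap]
  have hper : ∀ i : Fin n, ∑ σ : Fin n → Bool, w σ * (h i σ * gB A β B i σ) * TB A β B h σ
      ≤ M * D * Z := by
    intro i
    set Tc : (Fin n → Bool) → ℝ :=
      fun σ => (TB A β B h σ + TB A β B h (flipB i σ))/2 with hTc
    have hTcinv : ∀ σ, Tc (flipB i σ) = Tc σ := by
      intro σ
      simp only [hTc, flipB_invol i σ]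
      ring
    have hcen : ∑ σ : Fin n → Bool, (h i σ * Tc σ) * (w σ * gB A β B i σ) = 0 := by
      apply center A hs hdiag β B i
      intro σ
      rw [hinv, hTcinv]
    have hsplit : ∀ σ : Fin n → Bool, w σ * (h i σ * gB A β B i σ) * TB A β B h σ
        = w σ * (h i σ * gB A β B i σ) * (TB A β B h σ - Tc σ)
          + (h i σ * Tc σ) * (w σ * gB A β B i σ) := by
      intro σ; ring
    rw [Finset.sum_congr rfl (fun σ _ => hsplit σ), Finset.sum_add_distrib, hcen, add_zero]
    have hM0 : 0 ≤ M := le_trans (abs_nonneg _) (hM i (fun _ => false))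
    have hD0 : 0 ≤ D := le_trans (abs_nonneg _) (hD i (fun _ => false))
    have hbnd : ∀ σ : Fin n → Bool, w σ * (h i σ * gB A β B i σ) * (TB A β B h σ - Tc σ)
        ≤ w σ * (M * D) := by
      intro σ
      have h1 : |h i σ * gB A β B i σ * (TB A β B h σ - Tc σ)| ≤ M * D := by
        rw [abs_mul, abs_mul]
        have e1 : |TB A β B h σ - Tc σ| ≤ D/2 := by
          have heq : TB A β B h σ - Tc σ = (TB A β B h σ - TB A β B h (flipB i σ))/2 := by
            rw [hTc]; ring
          rw [heq, abs_div]
          have := hD i σ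
          rw [abs_of_pos (by norm_num : (0:ℝ) < 2)]
          linarith
        have b1 : |h i σ| * |gB A β B i σ| ≤ M * 2 :=
          mul_le_mul (hM i σ) (abs_g_le A β B i σ) (abs_nonneg _) hM0
        calc |h i σ| * |gB A β B i σ| * |TB A β B h σ - Tc σ|
            ≤ (M * 2) * (D/2) :=
              mul_le_mul b1 e1 (abs_nonneg _) (by linarith)
          _ = M * D := by ring
      have h2 := (abs_le.mp h1).2
      calc w σ * (h i σ * gB A β B i σ) * (TB A β B h σ - Tc σ)
          = w σ * (h i σ * gB A β B i σ * (TB A β B h σ - Tc σ)) := by ring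
        _ ≤ w σ * (M * D) := by
            apply mul_le_mul_of_nonneg_left h2 (hwpos σ).le
    calc ∑ σ : Fin n → Bool, w σ * (h i σ * gB A β B i σ) * (TB A β B h σ - Tc σ)
        ≤ ∑ σ : Fin n → Bool, w σ * (M * D) := Finset.sum_le_sum (fun σ _ => hbnd σ)
      _ = M * D * Z := by rw [← Finset.sum_mul, hZ]; ring
  calc ∑ i : Fin n, ∑ σ : Fin n → Bool, w σ * (h i σ * gB A β B i σ) * TB A β B h σ
      ≤ ∑ _i : Fin n, M * D * Z := Finset.sum_le_sum (fun i _ => hper i)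
    _ = n * (M * D) * Z := by rw [Finset.sum_const, Finset.card_univ]; simp; ring

def QT {n : ℕ} (A : Matrix (Fin n) (Fin n) ℝ) (β B : ℝ) (σ : Fin n → Bool) : ℝ :=
  TB A β B (fun i σ' => mloc A (spinVec n σ') i) σ

def WT {n : ℕ} (A : Matrix (Fin n) (Fin n) ℝ) (β B : ℝ) (σ : Fin n → Bool) : ℝ :=
  TB A β B (fun i _ => ∑ j, A i j) σ

lemma abs_mloc_le {n : ℕ} (A : Matrix (Fin n) (Fin n) ℝ) {γ : ℝ}
    (hnn : ∀ i j, 0 ≤ A i j) (hγ : ∀ i, (∑ j, A i j) ≤ γ) (i : Fin n) (σ : Fin n → Bool) :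
    |mloc A (spinVec n σ) i| ≤ γ := by
  unfold mloc
  calc |∑ j, A i j * spinVec n σ j| ≤ ∑ j, |A i j * spinVec n σ j| :=
        Finset.abs_sum_le_sum_abs _ _
    _ = ∑ j, A i j := by
        apply Finset.sum_congr rfl
        intro j _
        rw [abs_mul, abs_spin, abs_of_nonneg (hnn i j)]; ring
    _ ≤ γ := hγ i

lemma colsum_le {n : ℕ} (A : Matrix (Fin n) (Fin n) ℝ) {γ : ℝ} (hs : A.IsSymm)
    (hγ : ∀ i, (∑ j, A i j) ≤ γ) (i : Fin n) : (∑ j, A j i) ≤ γ := by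
  calc (∑ j, A j i) = ∑ j, A i j := Finset.sum_congr rfl (fun j _ => hs.apply i j)
    _ ≤ γ := hγ i

lemma spin_flip_ne {n : ℕ} (i : Fin n) (σ : Fin n → Bool) {j : Fin n} (h : j ≠ i) :
    spinVec n (flipB i σ) j = spinVec n σ j := by
  rw [spin_flip]; simp [h]

lemma QT_flip_diff {n : ℕ} (A : Matrix (Fin n) (Fin n) ℝ) {γ : ℝ} (hs : A.IsSymm)
    (hnn : ∀ i j, 0 ≤ A i j) (hdiag : ∀ i, A i i = 0) (hγ : ∀ i, (∑ j, A i j) ≤ γ)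
    (hγ0 : 0 ≤ γ) {β : ℝ} (B : ℝ) (hβ : 0 ≤ β) (i : Fin n) (σ : Fin n → Bool) :
    |QT A β B σ - QT A β B (flipB i σ)| ≤ 2*γ + (4+8*β*γ)*γ := by
  unfold QT TB
  rw [← Finset.sum_sub_distrib]
  calc |∑ j, (mloc A (spinVec n σ) j * gB A β B j σ
        - mloc A (spinVec n (flipB i σ)) j * gB A β B j (flipB i σ))|
      ≤ ∑ j, |mloc A (spinVec n σ) j * gB A β B j σ
        - mloc A (spinVec n (flipB i σ)) j * gB A β B j (flipB i σ)| :=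
        Finset.abs_sum_le_sum_abs _ _
    _ ≤ ∑ j, (if j = i then 2*γ else (4+8*β*γ)*(A j i)) := by
        apply Finset.sum_le_sum
        intro j _
        by_cases h : j = i
        · subst h
          rw [if_pos rfl, mloc_flip_self A hdiag, g_flip_self A hdiag, gB]
          have e1 : mloc A (spinVec n σ) j * (spinVec n σ j
              - Real.tanh (β * mloc A (spinVec n σ) j + B))
              - mloc A (spinVec n σ) j * (-(spinVec n σ j)
              - Real.tanh (β * mloc A (spinVec n σ) j + B))
              = 2 * (mloc A (spinVec n σ) j * spinVec n σ j) := by ring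
          rw [e1, abs_mul, abs_mul, abs_spin]
          have := abs_mloc_le A hnn hγ j σ
          rw [abs_of_nonneg (by norm_num : (0:ℝ) ≤ 2)]
          nlinarith
        · rw [if_neg h]
          have hmj : mloc A (spinVec n (flipB i σ)) j
              = mloc A (spinVec n σ) j - 2 * A j i * spinVec n σ i := mloc_flip A i σ j
          have hgj : gB A β B j (flipB i σ)
              = spinVec n σ j - Real.tanh (β * mloc A (spinVec n (flipB i σ)) j + B) := by
            unfold gB; rw [spin_flip_ne i σ h]
          have split : mloc A (spinVec n σ) j * gB A β B j σ
              - mloc A (spinVec n (flipB i σ)) j * gB A β B j (flipB i σ)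
              = (mloc A (spinVec n σ) j - mloc A (spinVec n (flipB i σ)) j) * gB A β B j σ
                + mloc A (spinVec n (flipB i σ)) j * (gB A β B j σ - gB A β B j (flipB i σ)) := by
            ring
          rw [split]
          have b1 : |(mloc A (spinVec n σ) j - mloc A (spinVec n (flipB i σ)) j) * gB A β B j σ|
              ≤ (2 * A j i) * 2 := by
            rw [abs_mul]
            apply mul_le_mul _ (abs_g_le A β B j σ) (abs_nonneg _)
              (by have := hnn j i; linarith)
            rw [hmj]
            have e2 : mloc A (spinVec n σ) j - (mloc A (spinVec n σ) j
                - 2 * A j i * spinVec n σ i) = 2 * A j i * spinVec n σ i := by ring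
            rw [e2, abs_mul, abs_spin, mul_one, abs_mul]
            rw [abs_of_nonneg (by norm_num : (0:ℝ) ≤ 2), abs_of_nonneg (hnn j i)]
          have b2 : |mloc A (spinVec n (flipB i σ)) j * (gB A β B j σ - gB A β B j (flipB i σ))|
              ≤ γ * (4 * (β * (2 * A j i))) := by
            rw [abs_mul]
            apply mul_le_mul (abs_mloc_le A hnn hγ j (flipB i σ)) _ (abs_nonneg _) hγ0
            rw [hgj]
            have e3 : gB A β B j σ - (spinVec n σ j
                - Real.tanh (β * mloc A (spinVec n (flipB i σ)) j + B))
                = Real.tanh (β * mloc A (spinVec n (flipB i σ)) j + B)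
                  - Real.tanh (β * mloc A (spinVec n σ) j + B) := by
              unfold gB; ring
            rw [e3]
            calc |Real.tanh (β * mloc A (spinVec n (flipB i σ)) j + B)
                - Real.tanh (β * mloc A (spinVec n σ) j + B)|
                ≤ 4 * |(β * mloc A (spinVec n (flipB i σ)) j + B)
                  - (β * mloc A (spinVec n σ) j + B)| := tanh_lip _ _
              _ ≤ 4 * (β * (2 * A j i)) := by
                  rw [hmj]
                  have e4 : β * (mloc A (spinVec n σ) j - 2 * A j i * spinVec n σ i) + B
                      - (β * mloc A (spinVec n σ) j + B) = -(β * (2 * A j i * spinVec n σ i)) := by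
                    ring
                  rw [e4, abs_neg, abs_mul, abs_mul, abs_mul, abs_spin]
                  rw [abs_of_nonneg hβ, abs_of_nonneg (by norm_num : (0:ℝ) ≤ 2),
                    abs_of_nonneg (hnn j i)]
                  ring_nf
                  nlinarith [hnn j i]
          calc |(mloc A (spinVec n σ) j - mloc A (spinVec n (flipB i σ)) j) * gB A β B j σ
              + mloc A (spinVec n (flipB i σ)) j * (gB A β B j σ - gB A β B j (flipB i σ))|
              ≤ |(mloc A (spinVec n σ) j - mloc A (spinVec n (flipB i σ)) j) * gB A β B j σ|
                + |mloc A (spinVec n (flipB i σ)) j * (gB A β B j σ - gB A β B j (flipB i σ))| :=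
                abs_add_le _ _
            _ ≤ (2 * A j i) * 2 + γ * (4 * (β * (2 * A j i))) := add_le_add b1 b2
            _ = (4+8*β*γ)*(A j i) := by ring
    _ = 2*γ - (4+8*β*γ)*(A i i) + ∑ j, (4+8*β*γ)*(A j i) := sum_ite_split i _ _
    _ ≤ 2*γ + (4+8*β*γ)*γ := by
        rw [hdiag]
        have h1 : ∑ j, (4+8*β*γ)*(A j i) = (4+8*β*γ) * ∑ j, A j i := by
          rw [Finset.mul_sum]
        rw [h1]
        have h2 := colsum_le A hs hγ i
        have h3 : (0:ℝ) ≤ 4+8*β*γ := by nlinarith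
        nlinarith

lemma WT_flip_diff {n : ℕ} (A : Matrix (Fin n) (Fin n) ℝ) {γ : ℝ} (hs : A.IsSymm)
    (hnn : ∀ i j, 0 ≤ A i j) (hdiag : ∀ i, A i i = 0) (hγ : ∀ i, (∑ j, A i j) ≤ γ)
    (hγ0 : 0 ≤ γ) {β : ℝ} (B : ℝ) (hβ : 0 ≤ β) (i : Fin n) (σ : Fin n → Bool) :
    |WT A β B σ - WT A β B (flipB i σ)| ≤ 2*γ + 8*β*γ*γ := by
  unfold WT TB
  rw [← Finset.sum_sub_distrib]
  calc |∑ j, ((∑ k, A j k) * gB A β B j σ - (∑ k, A j k) * gB A β B j (flipB i σ))|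
      ≤ ∑ j, |(∑ k, A j k) * (gB A β B j σ - gB A β B j (flipB i σ))| := by
        rw [Finset.sum_congr rfl (fun j _ => by rw [← mul_sub] :
          ∀ j ∈ Finset.univ, ((∑ k, A j k) * gB A β B j σ
            - (∑ k, A j k) * gB A β B j (flipB i σ))
            = (∑ k, A j k) * (gB A β B j σ - gB A β B j (flipB i σ)))]
        exact Finset.abs_sum_le_sum_abs _ _
    _ ≤ ∑ j, (if j = i then 2*γ else 8*β*γ*(A j i)) := by
        apply Finset.sum_le_sum
        intro j _
        have hr0 : 0 ≤ ∑ k, A j k := Finset.sum_nonneg (fun k _ => hnn j k)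
        have hrγ : |∑ k, A j k| ≤ γ := by rw [abs_of_nonneg hr0]; exact hγ j
        by_cases h : j = i
        · subst h
          rw [if_pos rfl, g_flip_self A hdiag, gB]
          have e1 : (spinVec n σ j - Real.tanh (β * mloc A (spinVec n σ) j + B))
              - (-(spinVec n σ j) - Real.tanh (β * mloc A (spinVec n σ) j + B))
              = 2 * spinVec n σ j := by ring
          rw [e1, abs_mul, abs_mul, abs_spin]
          rw [abs_of_nonneg (by norm_num : (0:ℝ) ≤ 2)]
          nlinarith [hrγ, abs_nonneg (∑ k, A j k)]
        · rw [if_neg h, abs_mul]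
          have hmj : mloc A (spinVec n (flipB i σ)) j
              = mloc A (spinVec n σ) j - 2 * A j i * spinVec n σ i := mloc_flip A i σ j
          have hgd : |gB A β B j σ - gB A β B j (flipB i σ)| ≤ 4 * (β * (2 * A j i)) := by
            have hgj : gB A β B j (flipB i σ)
                = spinVec n σ j - Real.tanh (β * mloc A (spinVec n (flipB i σ)) j + B) := by
              unfold gB; rw [spin_flip_ne i σ h]
            rw [hgj]
            have e3 : gB A β B j σ - (spinVec n σ j
                - Real.tanh (β * mloc A (spinVec n (flipB i σ)) j + B))
                = Real.tanh (β * mloc A (spinVec n (flipB i σ)) j + B)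
                  - Real.tanh (β * mloc A (spinVec n σ) j + B) := by
              unfold gB; ring
            rw [e3]
            calc |Real.tanh (β * mloc A (spinVec n (flipB i σ)) j + B)
                - Real.tanh (β * mloc A (spinVec n σ) j + B)|
                ≤ 4 * |(β * mloc A (spinVec n (flipB i σ)) j + B)
                  - (β * mloc A (spinVec n σ) j + B)| := tanh_lip _ _
              _ ≤ 4 * (β * (2 * A j i)) := by
                  rw [hmj]
                  have e4 : β * (mloc A (spinVec n σ) j - 2 * A j i * spinVec n σ i) + B
                      - (β * mloc A (spinVec n σ) j + B) = -(β * (2 * A j i * spinVec n σ i)) := by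
                    ring
                  rw [e4, abs_neg, abs_mul, abs_mul, abs_mul, abs_spin]
                  rw [abs_of_nonneg hβ, abs_of_nonneg (by norm_num : (0:ℝ) ≤ 2),
                    abs_of_nonneg (hnn j i)]
                  ring_nf
                  nlinarith [hnn j i]
          calc |∑ k, A j k| * |gB A β B j σ - gB A β B j (flipB i σ)|
              ≤ γ * (4 * (β * (2 * A j i))) :=
                mul_le_mul hrγ hgd (abs_nonneg _) hγ0
            _ = 8*β*γ*(A j i) := by ring
    _ = 2*γ - 8*β*γ*(A i i) + ∑ j, 8*β*γ*(A j i) := sum_ite_split i _ _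
    _ ≤ 2*γ + 8*β*γ*γ := by
        rw [hdiag]
        have h1 : ∑ j, 8*β*γ*(A j i) = 8*β*γ * ∑ j, A j i := by rw [Finset.mul_sum]
        rw [h1]
        have h2 := colsum_le A hs hγ i
        have h3 : (0:ℝ) ≤ 8*β*γ := by positivity
        nlinarith

lemma cheb {n : ℕ} (A : Matrix (Fin n) (Fin n) ℝ) (hs : A.IsSymm)
    (hdiag : ∀ i, A i i = 0) (β B : ℝ) (h : Fin n → (Fin n → Bool) → ℝ) (M D t : ℝ)
    (hM : ∀ i σ, |h i σ| ≤ M)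
    (hinv : ∀ i σ, h i (flipB i σ) = h i σ)
    (hD : ∀ i σ, |TB A β B h σ - TB A β B h (flipB i σ)| ≤ D)
    (ht : 0 < t) :
    ∑ σ : Fin n → Bool, (if t ≤ |TB A β B h σ| then isingWt A β B (spinVec n σ) else 0)
      ≤ (n * (M * D) / t^2) * ∑ σ : Fin n → Bool, isingWt A β B (spinVec n σ) := by
  have hvar := variance_bound A hs hdiag β B h M D hM hinv hD
  have step : ∀ σ : Fin n → Bool,
      (if t ≤ |TB A β B h σ| then isingWt A β B (spinVec n σ) else 0)
        ≤ isingWt A β B (spinVec n σ) * (TB A β B h σ)^2 / t^2 := by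
    intro σ
    have hw := Real.exp_pos (β / 2 * ∑ i, ∑ j, A i j * spinVec n σ i * spinVec n σ j
      + B * ∑ i, spinVec n σ i)
    by_cases hcase : t ≤ |TB A β B h σ|
    · rw [if_pos hcase]
      have h1 : t^2 ≤ (TB A β B h σ)^2 := by
        have h2 := mul_self_le_mul_self ht.le hcase
        nlinarith [sq_abs (TB A β B h σ)]
      rw [le_div_iff₀ (by positivity)]
      have : isingWt A β B (spinVec n σ) = Real.exp _ := rfl
      nlinarith [hw]
    · rw [if_neg hcase]
      positivity
  calc ∑ σ : Fin n → Bool, (if t ≤ |TB A β B h σ| then isingWt A β B (spinVec n σ) else 0)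
      ≤ ∑ σ : Fin n → Bool, isingWt A β B (spinVec n σ) * (TB A β B h σ)^2 / t^2 :=
        Finset.sum_le_sum (fun σ _ => step σ)
    _ = (∑ σ : Fin n → Bool, isingWt A β B (spinVec n σ) * (TB A β B h σ)^2) / t^2 := by
        rw [Finset.sum_div]
    _ ≤ (n * (M * D) * ∑ σ : Fin n → Bool, isingWt A β B (spinVec n σ)) / t^2 := by
        apply div_le_div_of_nonneg_right hvar (by positivity)
    _ = (n * (M * D) / t^2) * ∑ σ : Fin n → Bool, isingWt A β B (spinVec n σ) := by
        ring

lemma QT_large {n : ℕ} (A : Matrix (Fin n) (Fin n) ℝ) {γ : ℝ} {β B : ℝ}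
    (hnn : ∀ i j, 0 ≤ A i j) (hγ : ∀ i, (∑ j, A i j) ≤ γ) (hβ : 0 ≤ β) (σ : Fin n → Bool)
    (hP : (∀ i, spinVec n σ i * mloc A (spinVec n σ) i = |mloc A (spinVec n σ) i|)
      ∨ (∀ i, spinVec n σ i * mloc A (spinVec n σ) i = -|mloc A (spinVec n σ) i|)) :
    (1 - Real.tanh (β*γ + |B|)) * (∑ i, |mloc A (spinVec n σ) i|) ≤ |QT A β B σ| := by
  set x := spinVec n σ with hx
  set κ := 1 - Real.tanh (β*γ + |B|) with hκ
  have hb : ∀ i, |Real.tanh (β * mloc A x i + B)| ≤ 1 - κ := by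
    intro i
    rw [hκ]
    have h1 : |β * mloc A x i + B| ≤ β*γ + |B| := by
      calc |β * mloc A x i + B| ≤ |β * mloc A x i| + |B| := abs_add_le _ _
        _ ≤ β*γ + |B| := by
            rw [abs_mul, abs_of_nonneg hβ]
            have := abs_mloc_le A hnn hγ i σ
            nlinarith
    have := abs_tanh_le_tanh h1
    linarith
  have hterm_abs : ∀ i, mloc A x i * Real.tanh (β * mloc A x i + B)
      ≤ |mloc A x i| * (1 - κ) := by
    intro i
    calc mloc A x i * Real.tanh (β * mloc A x i + B)
        ≤ |mloc A x i * Real.tanh (β * mloc A x i + B)| := le_abs_self _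
      _ = |mloc A x i| * |Real.tanh (β * mloc A x i + B)| := abs_mul _ _
      _ ≤ |mloc A x i| * (1 - κ) :=
          mul_le_mul_of_nonneg_left (hb i) (abs_nonneg _)
  have hterm_abs' : ∀ i, -(|mloc A x i| * (1 - κ))
      ≤ mloc A x i * Real.tanh (β * mloc A x i + B) := by
    intro i
    have h2 : |mloc A x i * Real.tanh (β * mloc A x i + B)| ≤ |mloc A x i| * (1 - κ) := by
      rw [abs_mul]
      exact mul_le_mul_of_nonneg_left (hb i) (abs_nonneg _)
    have := (abs_le.mp h2).1
    linarith
  have hQeq : QT A β B σ = ∑ i, (mloc A x i * x i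
      - mloc A x i * Real.tanh (β * mloc A x i + B)) := by
    unfold QT TB gB
    apply Finset.sum_congr rfl
    intro i _
    ring
  rcases hP with hP | hP
  · have hlow : κ * ∑ i, |mloc A x i| ≤ QT A β B σ := by
      rw [hQeq, Finset.mul_sum]
      apply Finset.sum_le_sum
      intro i _
      have h3 : mloc A x i * x i = |mloc A x i| := by rw [mul_comm]; exact hP i
      rw [h3]
      have := hterm_abs i
      linarith
    calc κ * ∑ i, |mloc A x i| ≤ QT A β B σ := hlow
      _ ≤ |QT A β B σ| := le_abs_self _
  · have hhigh : QT A β B σ ≤ -(κ * ∑ i, |mloc A x i|) := by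
      rw [hQeq]
      have : -(κ * ∑ i, |mloc A x i|) = ∑ i, -(κ * |mloc A x i|) := by
        rw [Finset.mul_sum, ← Finset.sum_neg_distrib]
      rw [this]
      apply Finset.sum_le_sum
      intro i _
      have h3 : mloc A x i * x i = -|mloc A x i| := by rw [mul_comm]; exact hP i
      rw [h3]
      have := hterm_abs' i
      linarith
    have habs : κ * ∑ i, |mloc A x i| ≤ -(QT A β B σ) := by linarith
    calc κ * ∑ i, |mloc A x i| ≤ -(QT A β B σ) := habs
      _ ≤ |QT A β B σ| := neg_le_abs _

lemma bad_point {n : ℕ} (A : Matrix (Fin n) (Fin n) ℝ) {γ c β B : ℝ} (hs : A.IsSymm)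
    (hnn : ∀ i j, 0 ≤ A i j) (hγ : ∀ i, (∑ j, A i j) ≤ γ)
    (hγ0 : 0 ≤ γ) (hβ : 0 ≤ β) (hB : B ≠ 0)
    (hc : c * n ≤ ∑ i, ∑ j, A i j) (hc0 : 0 < c) (σ : Fin n → Bool)
    (hbad : ¬ ((¬ (∀ i, spinVec n σ i * mloc A (spinVec n σ) i = |mloc A (spinVec n σ) i|)) ∧
      (¬ (∀ i, spinVec n σ i * mloc A (spinVec n σ) i = -|mloc A (spinVec n σ) i|)) ∧
      spinVec n σ ≠ (fun _ => 1) ∧ spinVec n σ ≠ (fun _ => -1))) :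
    ((1 - Real.tanh (β*γ + |B|)) * (|Real.tanh B| * c/(2*(1+4*β*γ)))) * n ≤ |QT A β B σ|
    ∨ (|Real.tanh B| * c / 2) * n ≤ |WT A β B σ| := by
  set x := spinVec n σ with hx
  set κ := 1 - Real.tanh (β*γ + |B|) with hκ
  set τ := |Real.tanh B| with hτ
  set δ := τ * c/(2*(1+4*β*γ)) with hδ
  have hκ0 : 0 < κ := by rw [hκ]; linarith [tanh_lt_one' (β*γ + |B|)]
  have hτ0 : 0 < τ := abs_tanh_pos hB
  have hden : (0:ℝ) < 1+4*β*γ := by nlinarith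
  have hδ0 : 0 < δ := by rw [hδ]; apply div_pos (mul_pos hτ0 hc0) (by linarith)
  have hor : (∀ i, x i * mloc A x i = |mloc A x i|)
      ∨ (∀ i, x i * mloc A x i = -|mloc A x i|)
      ∨ x = (fun _ => 1) ∨ x = (fun _ => -1) := by tauto
  have hP : (∀ i, x i * mloc A x i = |mloc A x i|)
      ∨ (∀ i, x i * mloc A x i = -|mloc A x i|) := by
    rcases hor with h | h | h | h
    · exact Or.inl h
    · exact Or.inr h
    · left
      intro i
      rw [h]
      have hm : mloc A (fun _ => (1:ℝ)) i = ∑ j, A i j := by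
        unfold mloc; apply Finset.sum_congr rfl; intro j _; ring
      rw [hm]
      rw [abs_of_nonneg (Finset.sum_nonneg (fun j _ => hnn i j))]
      ring
    · left
      intro i
      rw [h]
      have hm : mloc A (fun _ => (-1:ℝ)) i = -(∑ j, A i j) := by
        unfold mloc
        rw [← Finset.sum_neg_distrib]
        apply Finset.sum_congr rfl; intro j _; ring
      rw [hm]
      rw [abs_neg, abs_of_nonneg (Finset.sum_nonneg (fun j _ => hnn i j))]
      ring
  have hQ : κ * ∑ i, |mloc A x i| ≤ |QT A β B σ| := QT_large A hnn hγ hβ σ hP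
  set Sm := ∑ i, |mloc A x i| with hSm
  have hSm0 : 0 ≤ Sm := Finset.sum_nonneg (fun i _ => abs_nonneg _)
  by_cases hcase : δ * n ≤ Sm
  · left
    calc κ * δ * n = κ * (δ * n) := by ring
      _ ≤ κ * Sm := mul_le_mul_of_nonneg_left hcase hκ0.le
      _ ≤ |QT A β B σ| := hQ
  · right
    have hSmlt : Sm ≤ δ * n := (le_of_not_ge hcase)
    -- decomposition of WT
    have key1 : ∑ i, (∑ j, A i j) * x i = ∑ i, mloc A x i := by
      have e1 : ∑ i, mloc A x i = ∑ j, ∑ i, A i j * x j := by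
        unfold mloc; rw [Finset.sum_comm]
      rw [e1]
      apply Finset.sum_congr rfl
      intro j _
      rw [← Finset.sum_mul]
      congr 1
      apply Finset.sum_congr rfl
      intro i _
      exact hs.apply i j
    have decomp : WT A β B σ = (∑ i, mloc A x i)
        - (∑ i, ∑ j, A i j) * Real.tanh B
        - ∑ i, ((∑ j, A i j) * (Real.tanh (β * mloc A x i + B) - Real.tanh B)) := by
      unfold WT TB gB
      have e2 : ∀ i, (∑ j, A i j) * (x i - Real.tanh (β * mloc A x i + B))
          = (∑ j, A i j) * x i - (∑ j, A i j) * Real.tanh B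
            - ((∑ j, A i j) * (Real.tanh (β * mloc A x i + B) - Real.tanh B)) := by
        intro i; ring
      rw [Finset.sum_congr rfl (fun i _ => e2 i), Finset.sum_sub_distrib,
        Finset.sum_sub_distrib, key1, ← Finset.sum_mul]
    have S3bound : |∑ i, ((∑ j, A i j) * (Real.tanh (β * mloc A x i + B) - Real.tanh B))|
        ≤ 4*β*γ*Sm := by
      calc |∑ i, ((∑ j, A i j) * (Real.tanh (β * mloc A x i + B) - Real.tanh B))|
          ≤ ∑ i, |(∑ j, A i j) * (Real.tanh (β * mloc A x i + B) - Real.tanh B)| :=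
            Finset.abs_sum_le_sum_abs _ _
        _ ≤ ∑ i, γ * (4 * (β * |mloc A x i|)) := by
            apply Finset.sum_le_sum
            intro i _
            rw [abs_mul]
            have hr0 : 0 ≤ ∑ j, A i j := Finset.sum_nonneg (fun j _ => hnn i j)
            have hrγ : |∑ j, A i j| ≤ γ := by rw [abs_of_nonneg hr0]; exact hγ i
            have htl : |Real.tanh (β * mloc A x i + B) - Real.tanh B|
                ≤ 4 * (β * |mloc A x i|) := by
              calc |Real.tanh (β * mloc A x i + B) - Real.tanh B|
                  ≤ 4 * |(β * mloc A x i + B) - B| := tanh_lip _ _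
                _ = 4 * (β * |mloc A x i|) := by
                    rw [show (β * mloc A x i + B) - B = β * mloc A x i by ring,
                      abs_mul, abs_of_nonneg hβ]
            exact mul_le_mul hrγ htl (abs_nonneg _) hγ0
        _ = 4*β*γ*Sm := by
            rw [hSm, Finset.mul_sum]
            apply Finset.sum_congr rfl
            intro i _; ring
    have S1bound : |∑ i, mloc A x i| ≤ Sm := by
      rw [hSm]; exact Finset.abs_sum_le_sum_abs _ _
    have hrow : c * n ≤ ∑ i, ∑ j, A i j := hc
    have hrow0 : 0 ≤ ∑ i, ∑ j, A i j :=
      Finset.sum_nonneg (fun i _ => Finset.sum_nonneg (fun j _ => hnn i j))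
    have htriangle : |(∑ i, ∑ j, A i j) * Real.tanh B|
        ≤ |∑ i, mloc A x i|
          + |∑ i, ((∑ j, A i j) * (Real.tanh (β * mloc A x i + B) - Real.tanh B))|
          + |WT A β B σ| := by
      have e3 : (∑ i, ∑ j, A i j) * Real.tanh B
          = ((∑ i, mloc A x i)
            - (∑ i, ((∑ j, A i j) * (Real.tanh (β * mloc A x i + B) - Real.tanh B))))
            - WT A β B σ := by
        rw [decomp]; ring
      rw [e3]
      calc |((∑ i, mloc A x i)
            - (∑ i, ((∑ j, A i j) * (Real.tanh (β * mloc A x i + B) - Real.tanh B))))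
            - WT A β B σ|
          ≤ |(∑ i, mloc A x i)
            - (∑ i, ((∑ j, A i j) * (Real.tanh (β * mloc A x i + B) - Real.tanh B)))|
            + |WT A β B σ| := abs_sub _ _
        _ ≤ |∑ i, mloc A x i|
            + |∑ i, ((∑ j, A i j) * (Real.tanh (β * mloc A x i + B) - Real.tanh B))|
            + |WT A β B σ| := by
            have := abs_sub (∑ i, mloc A x i)
              (∑ i, ((∑ j, A i j) * (Real.tanh (β * mloc A x i + B) - Real.tanh B)))
            linarith
    have hlhs : τ * (c * n) ≤ |(∑ i, ∑ j, A i j) * Real.tanh B| := by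
      rw [abs_mul, abs_of_nonneg hrow0, ← hτ]
      nlinarith [mul_nonneg (sub_nonneg.mpr hrow) hτ0.le]
    have harith : (1+4*β*γ) * δ = τ * c / 2 := by
      rw [hδ]
      field_simp
    have harithn : (1+4*β*γ) * δ * n = τ * c / 2 * n := by rw [harith]
    have hn0 : (0:ℝ) ≤ n := Nat.cast_nonneg n
    have hS3' : |∑ i, ((∑ j, A i j) * (Real.tanh (β * mloc A x i + B) - Real.tanh B))|
        ≤ 4*β*γ*(δ*n) := by
      have h4 : (0:ℝ) ≤ 4*β*γ := by positivity
      nlinarith [S3bound]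
    have hS1' : |∑ i, mloc A x i| ≤ δ * n := le_trans S1bound hSmlt
    linarith [htriangle, hlhs, hS1', hS3', harithn]

def Kconst (γ c β B : ℝ) : ℝ :=
  γ*(2*γ + (4+8*β*γ)*γ) / ((1 - Real.tanh (β*γ + |B|)) * (|Real.tanh B| * c/(2*(1+4*β*γ))))^2
  + γ*(2*γ + 8*β*γ*γ) / (|Real.tanh B| * c / 2)^2

lemma master {n : ℕ} (A : Matrix (Fin n) (Fin n) ℝ) {γ c β B : ℝ} (hs : A.IsSymm)
    (hnn : ∀ i j, 0 ≤ A i j) (hdiag : ∀ i, A i i = 0) (hγ : ∀ i, (∑ j, A i j) ≤ γ)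
    (hγ0 : 0 ≤ γ) (hβ : 0 ≤ β) (hB : B ≠ 0)
    (hc : c * n ≤ ∑ i, ∑ j, A i j) (hc0 : 0 < c) (hn : 1 ≤ n) :
    1 - Kconst γ c β B / n ≤ isingProb A β B
      {x | ¬ (∀ i, x i * mloc A x i = |mloc A x i|) ∧
           ¬ (∀ i, x i * mloc A x i = -|mloc A x i|) ∧
           x ≠ (fun _ => 1) ∧ x ≠ (fun _ => -1)}
    ∧ isingProb A β B
      {x | ¬ (∀ i, x i * mloc A x i = |mloc A x i|) ∧
           ¬ (∀ i, x i * mloc A x i = -|mloc A x i|) ∧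
           x ≠ (fun _ => 1) ∧ x ≠ (fun _ => -1)} ≤ 1 := by
  classical
  set E : Set (Fin n → ℝ) :=
    {x | ¬ (∀ i, x i * mloc A x i = |mloc A x i|) ∧
         ¬ (∀ i, x i * mloc A x i = -|mloc A x i|) ∧
         x ≠ (fun _ => 1) ∧ x ≠ (fun _ => -1)} with hE
  set κ := 1 - Real.tanh (β*γ + |B|) with hκ
  set τ := |Real.tanh B| with hτ
  set δ := τ * c/(2*(1+4*β*γ)) with hδ
  have hκ0 : 0 < κ := by rw [hκ]; linarith [tanh_lt_one' (β*γ + |B|)]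
  have hτ0 : 0 < τ := abs_tanh_pos hB
  have hden : (0:ℝ) < 1+4*β*γ := by nlinarith
  have hδ0 : 0 < δ := by rw [hδ]; apply div_pos (mul_pos hτ0 hc0) (by linarith)
  have hn0 : (0:ℝ) < n := by exact_mod_cast hn
  set t₁ := (κ * δ) * n with ht₁def
  set t₂ := (τ * c / 2) * n with ht₂def
  have ht₁ : 0 < t₁ := by rw [ht₁def]; positivity
  have ht₂ : 0 < t₂ := by rw [ht₂def]; positivity
  set w : (Fin n → Bool) → ℝ := fun σ => isingWt A β B (spinVec n σ) with hw
  have hwpos : ∀ σ, 0 < w σ := fun σ => Real.exp_pos _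
  set Z := ∑ σ : Fin n → Bool, w σ with hZdef
  have hZ : 0 < Z := Finset.sum_pos (fun σ _ => hwpos σ) Finset.univ_nonempty
  set Sbad := ∑ σ : Fin n → Bool, (if spinVec n σ ∈ E then 0 else w σ) with hSbad
  have hSbad0 : 0 ≤ Sbad := Finset.sum_nonneg (fun σ _ => by
    by_cases h : spinVec n σ ∈ E
    · rw [if_pos h]
    · rw [if_neg h]; exact (hwpos σ).le)
  have hNZ : (∑ σ : Fin n → Bool, E.indicator (isingWt A β B) (spinVec n σ)) = Z - Sbad := by
    rw [hSbad, hZdef, ← Finset.sum_sub_distrib]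
    apply Finset.sum_congr rfl
    intro σ _
    by_cases h : spinVec n σ ∈ E
    · rw [Set.indicator_of_mem h, if_pos h, sub_zero]
    · rw [Set.indicator_of_notMem h, if_neg h, sub_self]
  -- Chebyshev bounds
  have cQ := cheb A hs hdiag β B (fun i σ' => mloc A (spinVec n σ') i) γ
    (2*γ + (4+8*β*γ)*γ) t₁
    (fun i σ' => abs_mloc_le A hnn hγ i σ')
    (fun i σ' => mloc_flip_self A hdiag i σ')
    (fun i σ' => QT_flip_diff A hs hnn hdiag hγ hγ0 B hβ i σ') ht₁
  have cW := cheb A hs hdiag β B (fun i _ => ∑ j, A i j) γ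
    (2*γ + 8*β*γ*γ) t₂
    (fun i _ => by
      rw [abs_of_nonneg (Finset.sum_nonneg (fun j _ => hnn i j))]; exact hγ i)
    (fun i _ => rfl)
    (fun i σ' => WT_flip_diff A hs hnn hdiag hγ hγ0 B hβ i σ') ht₂
  have hsplitbad : Sbad ≤
      (∑ σ : Fin n → Bool, (if t₁ ≤ |QT A β B σ| then w σ else 0))
      + (∑ σ : Fin n → Bool, (if t₂ ≤ |WT A β B σ| then w σ else 0)) := by
    rw [hSbad, ← Finset.sum_add_distrib]
    apply Finset.sum_le_sum
    intro σ _
    by_cases h : spinVec n σ ∈ E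
    · rw [if_pos h]
      have a1 : (0:ℝ) ≤ (if t₁ ≤ |QT A β B σ| then w σ else 0) := by
        by_cases h2 : t₁ ≤ |QT A β B σ|
        · rw [if_pos h2]; exact (hwpos σ).le
        · rw [if_neg h2]
      have a2 : (0:ℝ) ≤ (if t₂ ≤ |WT A β B σ| then w σ else 0) := by
        by_cases h2 : t₂ ≤ |WT A β B σ|
        · rw [if_pos h2]; exact (hwpos σ).le
        · rw [if_neg h2]
      linarith
    · rw [if_neg h]
      have hbad : ¬ ((¬ (∀ i, spinVec n σ i * mloc A (spinVec n σ) i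
            = |mloc A (spinVec n σ) i|)) ∧
          (¬ (∀ i, spinVec n σ i * mloc A (spinVec n σ) i = -|mloc A (spinVec n σ) i|)) ∧
          spinVec n σ ≠ (fun _ => 1) ∧ spinVec n σ ≠ (fun _ => -1)) := by
        intro hcon
        exact h hcon
      have hdisj := bad_point A hs hnn hγ hγ0 hβ hB hc hc0 σ hbad
      rcases hdisj with hd | hd
      · have : t₁ ≤ |QT A β B σ| := by rw [ht₁def, hκ, hδ, hτ]; linarith [hd]
        rw [if_pos this]
        by_cases h2 : t₂ ≤ |WT A β B σ|
        · rw [if_pos h2]; linarith [(hwpos σ).le]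
        · rw [if_neg h2]; linarith
      · have : t₂ ≤ |WT A β B σ| := by rw [ht₂def]; exact hd
        rw [if_pos this]
        by_cases h2 : t₁ ≤ |QT A β B σ|
        · rw [if_pos h2]; linarith [(hwpos σ).le]
        · rw [if_neg h2]; linarith
  have hKbound : Sbad ≤ (Kconst γ c β B / n) * Z := by
    have e1 : (n : ℝ) * (γ * (2*γ + (4+8*β*γ)*γ)) / t₁^2
        = (γ*(2*γ + (4+8*β*γ)*γ) / (κ * δ)^2) / n := by
      rw [ht₁def]
      have : ((κ * δ) * n)^2 = (κ*δ)^2 * n^2 := by ring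
      rw [this]
      field_simp
    have e2 : (n : ℝ) * (γ * (2*γ + 8*β*γ*γ)) / t₂^2
        = (γ*(2*γ + 8*β*γ*γ) / (τ * c / 2)^2) / n := by
      rw [ht₂def]
      have : ((τ * c / 2) * n)^2 = (τ*c/2)^2 * n^2 := by ring
      rw [this]
      field_simp
    have hQTsum : (∑ σ : Fin n → Bool, (if t₁ ≤ |QT A β B σ| then w σ else 0))
        ≤ ((n : ℝ) * (γ * (2*γ + (4+8*β*γ)*γ)) / t₁^2) * Z := by
      have := cQ
      simpa [QT, hw, hZdef] using this
    have hWTsum : (∑ σ : Fin n → Bool, (if t₂ ≤ |WT A β B σ| then w σ else 0))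
        ≤ ((n : ℝ) * (γ * (2*γ + 8*β*γ*γ)) / t₂^2) * Z := by
      have := cW
      simpa [WT, hw, hZdef] using this
    calc Sbad ≤ (∑ σ : Fin n → Bool, (if t₁ ≤ |QT A β B σ| then w σ else 0))
        + (∑ σ : Fin n → Bool, (if t₂ ≤ |WT A β B σ| then w σ else 0)) := hsplitbad
      _ ≤ ((n : ℝ) * (γ * (2*γ + (4+8*β*γ)*γ)) / t₁^2) * Z
          + ((n : ℝ) * (γ * (2*γ + 8*β*γ*γ)) / t₂^2) * Z := add_le_add hQTsum hWTsum
      _ = (Kconst γ c β B / n) * Z := by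
          rw [e1, e2, Kconst, ← hκ, ← hτ, ← hδ]
          ring
  have hprob : isingProb A β B E = 1 - Sbad / Z := by
    unfold isingProb
    rw [hNZ]
    rw [sub_div, div_self (ne_of_gt hZ)]
  constructor
  · rw [hprob]
    have : Sbad / Z ≤ Kconst γ c β B / n := by
      rw [div_le_iff₀ hZ]
      exact hKbound
    linarith
  · rw [hprob]
    have : 0 ≤ Sbad / Z := div_nonneg hSbad0 hZ.le
    linarith

/-- `P_{n,β₀,B₀}(A_{2,n}ᶜ ∩ A_{3,n}ᶜ ∩ A_{4,n}ᶜ) → 1`. -/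
theorem stmt1 (A : (n : ℕ) → Matrix (Fin n) (Fin n) ℝ)
    (hsymm : ∀ n, (A n).IsSymm)
    (hnonneg : ∀ n, ∀ i j : Fin n, 0 ≤ A n i j)
    (hdiag : ∀ n, ∀ i : Fin n, A n i i = 0)
    (hBD : ∃ γ : ℝ, ∀ n, ∀ i : Fin n, (∑ j, A n i j) ≤ γ)
    (hNT : 0 < liminf (fun n : ℕ => (1 / (n : ℝ)) * ∑ i, ∑ j, A n i j) atTop)
    (β₀ B₀ : ℝ) (hβ : 0 < β₀) (hB : B₀ ≠ 0) :
    Tendsto (fun n : ℕ => isingProb (A n) β₀ B₀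
      {x | ¬ (∀ i, x i * mloc (A n) x i = |mloc (A n) x i|) ∧
           ¬ (∀ i, x i * mloc (A n) x i = -|mloc (A n) x i|) ∧
           x ≠ (fun _ => 1) ∧ x ≠ (fun _ => -1)}) atTop (nhds 1) := by
  obtain ⟨γ, hγall⟩ := hBD
  have hγ0 : 0 ≤ γ := by
    have h1 := hγall 1 0
    rw [Fin.sum_univ_one, hdiag 1 0] at h1
    exact h1
  set f : ℕ → ℝ := fun n => (1/(n:ℝ)) * ∑ i, ∑ j, A n i j with hf
  set L := liminf f atTop with hLdef
  have hL : 0 < L := hNT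
  have hbd : ∀ n, f n ≤ γ := by
    intro n
    by_cases hn : n = 0
    · subst hn
      simp only [hf]
      rw [show (∑ i : Fin 0, ∑ j : Fin 0, A 0 i j) = 0 from rfl]
      simpa using hγ0
    · have hn0 : (0:ℝ) < n := by
        have : 0 < n := Nat.pos_of_ne_zero hn
        exact_mod_cast this
      have hsum : (∑ i, ∑ j, A n i j) ≤ n * γ := by
        calc (∑ i, ∑ j, A n i j) ≤ ∑ _i : Fin n, γ :=
              Finset.sum_le_sum (fun i _ => hγall n i)
          _ = n * γ := by rw [Finset.sum_const, Finset.card_univ]; simp [mul_comm]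
      show (1/(n:ℝ)) * ∑ i, ∑ j, A n i j ≤ γ
      rw [div_mul_eq_mul_div, one_mul, div_le_iff₀ hn0]
      linarith [hsum]
  have hbdd : IsBoundedUnder (· ≤ ·) atTop f := by
    refine ⟨γ, ?_⟩
    exact eventually_map.mpr (Eventually.of_forall hbd)
  have hbdd2 : IsBoundedUnder (· ≥ ·) atTop f := by
    refine ⟨0, ?_⟩
    refine eventually_map.mpr (Eventually.of_forall ?_)
    intro n
    show 0 ≤ (1/(n:ℝ)) * ∑ i, ∑ j, A n i j
    apply mul_nonneg (by positivity)
    exact Finset.sum_nonneg (fun i _ => Finset.sum_nonneg (fun j _ => hnonneg n i j))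
  have hev1 : ∀ᶠ n in atTop, L/2 < f n :=
    eventually_lt_of_lt_liminf (by linarith) hbdd2
  have hev2 : ∀ᶠ n : ℕ in atTop, 1 ≤ n := eventually_ge_atTop 1
  have hev : ∀ᶠ n : ℕ in atTop, (L/2) * n ≤ (∑ i, ∑ j, A n i j) ∧ 1 ≤ n := by
    filter_upwards [hev1, hev2] with n h1 h2
    refine ⟨?_, h2⟩
    have hn0 : (0:ℝ) < n := by exact_mod_cast h2
    have heq : f n * n = ∑ i, ∑ j, A n i j := by
      show (1/(n:ℝ)) * (∑ i, ∑ j, A n i j) * n = _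
      field_simp
    nlinarith [mul_lt_mul_of_pos_right h1 hn0]
  set K := Kconst γ (L/2) β₀ B₀ with hK
  have hg : Tendsto (fun n : ℕ => 1 - K/(n:ℝ)) atTop (nhds 1) := by
    have h1 := tendsto_const_div_atTop_nhds_zero_nat K
    have h2 := h1.const_sub 1
    simpa using h2
  apply tendsto_of_tendsto_of_tendsto_of_le_of_le' hg tendsto_const_nhds
  · filter_upwards [hev] with n hn
    exact (master (A n) (hsymm n) (hnonneg n) (hdiag n) (hγall n) hγ0 hβ.le hB
      hn.1 (by linarith) hn.2).1
  · filter_upwards [hev] with n hn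
    exact (master (A n) (hsymm n) (hnonneg n) (hdiag n) (hγall n) hγ0 hβ.le hB
      hn.1 (by linarith) hn.2).2
end
end

section
/- Let {A_n} be a sequence of n×n symmetric matrices with nonnegative entries and zeros on the diagonal satisfying (BD) and (NT), let β > 0 and B₀ ≠ 0 with (β, B₀) ∈ Θ, and suppose β is known. Then with P_{n,β,B₀}-probability tending to 1, the one-dimensional equation R_n(β, B | X) = 0 has a unique root B̂_n ∈ ℝ, and √n(B̂_n − B₀) = O_p(1) under P_{n,β,B₀}: for every ε > 0 there exists M < ∞ with limsup_{n→∞} P_{n,β,B₀}( the root fails to exist uniquely, or √n |B̂_n − B₀| > M ) ≤ ε. -/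
open Filter

noncomputable section

namespace Stmt10Aux


lemma tanh_sub_tanh (a b : ℝ) :
    Real.tanh a - Real.tanh b = Real.sinh (a - b) / (Real.cosh a * Real.cosh b) := by
  rw [Real.tanh_eq_sinh_div_cosh, Real.tanh_eq_sinh_div_cosh, Real.sinh_sub]
  field_simp [(Real.cosh_pos a).ne', (Real.cosh_pos b).ne']

lemma abs_sinh_lt_cosh (x : ℝ) : |Real.sinh x| < Real.cosh x := by
  rw [abs_lt]
  constructor
  · nlinarith [Real.exp_pos x, Real.sinh_add_cosh x]
  · nlinarith [Real.exp_pos (-x), Real.cosh_sub_sinh x]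

lemma abs_tanh_lt_one (x : ℝ) : |Real.tanh x| < 1 := by
  rw [Real.tanh_eq_sinh_div_cosh, abs_div, abs_of_pos (Real.cosh_pos x),
    div_lt_one (Real.cosh_pos x)]
  exact abs_sinh_lt_cosh x

lemma tanh_strictMono : StrictMono Real.tanh := by
  intro a b hab
  have h := tanh_sub_tanh b a
  have h1 : 0 < Real.sinh (b - a) := Real.sinh_pos_iff.2 (by linarith)
  have h2 : 0 < Real.cosh b * Real.cosh a := mul_pos (Real.cosh_pos b) (Real.cosh_pos a)
  nlinarith [div_pos h1 h2]

lemma sinh_le_mul_cosh {t : ℝ} (ht : 0 ≤ t) : Real.sinh t ≤ t * Real.cosh t := by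
  have hmono : MonotoneOn (fun s => s * Real.cosh s - Real.sinh s) (Set.Ici (0:ℝ)) := by
    apply monotoneOn_of_deriv_nonneg (convex_Ici 0)
    · exact ((continuous_id.mul Real.continuous_cosh).sub Real.continuous_sinh).continuousOn
    · intro s hs
      exact (((differentiable_id.mul Real.differentiable_cosh).sub
        Real.differentiable_sinh) s).differentiableWithinAt
    · intro s hs
      rw [interior_Ici, Set.mem_Ioi] at hs
      have hd : HasDerivAt (fun s => s * Real.cosh s - Real.sinh s)
          (1 * Real.cosh s + s * Real.sinh s - Real.cosh s) s :=
        ((hasDerivAt_id s).mul (Real.hasDerivAt_cosh s)).sub (Real.hasDerivAt_sinh s)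
      rw [hd.deriv]
      nlinarith [Real.sinh_pos_iff.2 hs]
  have := hmono (Set.self_mem_Ici) (Set.mem_Ici.2 ht) ht
  simpa using this

lemma abs_tanh_sub_tanh_le (a b : ℝ) : |Real.tanh a - Real.tanh b| ≤ 2 * |a - b| := by
  rw [tanh_sub_tanh, abs_div, Real.abs_sinh,
    abs_of_pos (mul_pos (Real.cosh_pos a) (Real.cosh_pos b)),
    div_le_iff₀ (mul_pos (Real.cosh_pos a) (Real.cosh_pos b))]
  have h1 : Real.sinh |a - b| ≤ |a - b| * Real.cosh |a - b| := sinh_le_mul_cosh (abs_nonneg _)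
  have h2 : Real.cosh |a - b| ≤ 2 * (Real.cosh a * Real.cosh b) := by
    rw [Real.cosh_abs, Real.cosh_sub]
    have ha := abs_sinh_lt_cosh a
    have hb := abs_sinh_lt_cosh b
    have h3 : |Real.sinh a * Real.sinh b| ≤ Real.cosh a * Real.cosh b := by
      rw [abs_mul]
      exact mul_le_mul ha.le hb.le (abs_nonneg _) (Real.cosh_pos a).le
    nlinarith [neg_abs_le (Real.sinh a * Real.sinh b)]
  nlinarith [abs_nonneg (a - b), Real.cosh_pos a, Real.cosh_pos b]

lemma tanh_sub_tanh_ge {a b : ℝ} (hab : b ≤ a) :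
    (a - b) / (Real.cosh a * Real.cosh b) ≤ Real.tanh a - Real.tanh b := by
  rw [tanh_sub_tanh]
  have hc : (0:ℝ) < Real.cosh a * Real.cosh b := mul_pos (Real.cosh_pos a) (Real.cosh_pos b)
  rw [div_le_div_iff_of_pos_right hc]
  exact Real.self_le_sinh_iff.2 (by linarith)

lemma one_sub_tanh_le (s : ℝ) : 1 - Real.tanh s ≤ 2 * Real.exp (-(2*s)) := by
  have h : 1 - Real.tanh s = Real.exp (-s) / Real.cosh s := by
    rw [Real.tanh_eq_sinh_div_cosh, eq_div_iff (Real.cosh_pos s).ne', sub_mul,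
      div_mul_cancel₀ _ (Real.cosh_pos s).ne']
    linarith [Real.cosh_sub_sinh s]
  rw [h]
  have h2 : Real.exp s / 2 ≤ Real.cosh s := by
    rw [Real.cosh_eq]; nlinarith [Real.exp_pos (-s)]
  have h3 : Real.exp (-s) / Real.cosh s ≤ Real.exp (-s) / (Real.exp s / 2) := by
    apply div_le_div_of_nonneg_left (Real.exp_pos (-s)).le (by positivity) h2
  refine h3.trans (le_of_eq ?_)
  rw [show -(2*s) = -s + -s by ring, Real.exp_add]
  field_simp [Real.exp_ne_zero]
  have he : Real.exp (-s) * Real.exp s = 1 := by rw [← Real.exp_add]; simp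
  linarith [he]


variable {n : ℕ}

lemma sum_mul_update (f x : Fin n → ℝ) (i : Fin n) (c : ℝ) :
    ∑ k, f k * Function.update x i c k = (∑ k, f k * x k) + f i * (c - x i) := by
  have h : ∀ k : Fin n, f k * Function.update x i c k
      = f k * x k + (if k = i then f i * (c - x i) else 0) := by
    intro k
    rcases eq_or_ne k i with rfl | hk
    · simp [Function.update_self]; ring
    · simp [Function.update_of_ne hk, hk]
  rw [Finset.sum_congr rfl (fun k _ => h k), Finset.sum_add_distrib,
    Finset.sum_ite_eq' Finset.univ i]
  simp

lemma sum_update (x : Fin n → ℝ) (i : Fin n) (c : ℝ) :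
    ∑ k, Function.update x i c k = (∑ k, x k) + (c - x i) := by
  have := sum_mul_update (fun _ => (1:ℝ)) x i c
  simpa using this

lemma mloc_update (Am : Matrix (Fin n) (Fin n) ℝ) (x : Fin n → ℝ) (i j : Fin n) (c : ℝ) :
    mloc Am (Function.update x i c) j = mloc Am x j + Am j i * (c - x i) := by
  unfold mloc
  exact sum_mul_update (fun k => Am j k) x i c

lemma mloc_update_self (Am : Matrix (Fin n) (Fin n) ℝ) (hd : Am i i = 0)
    (x : Fin n → ℝ) (c : ℝ) :
    mloc Am (Function.update x i c) i = mloc Am x i := by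
  rw [mloc_update, hd]; ring

lemma quad_update (Am : Matrix (Fin n) (Fin n) ℝ) (hs : Am.IsSymm)
    (x : Fin n → ℝ) (i : Fin n) (c : ℝ) :
    ∑ j, ∑ k, Am j k * Function.update x i c j * Function.update x i c k =
      (∑ j, ∑ k, Am j k * x j * x k) + 2 * mloc Am x i * (c - x i)
        + Am i i * (c - x i) ^ 2 := by
  set u := Function.update x i c with hu
  have hrow : ∀ j, ∑ k, Am j k * u j * u k
      = (mloc Am x j + Am j i * (c - x i)) * u j := by
    intro j
    have h1 : ∑ k, Am j k * u j * u k = (∑ k, Am j k * u k) * u j := by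
      rw [Finset.sum_mul]; exact Finset.sum_congr rfl (fun k _ => by ring)
    rw [h1, hu]
    rw [show (∑ k, Am j k * Function.update x i c k) = mloc Am x j + Am j i * (c - x i) from
      sum_mul_update (fun k => Am j k) x i c]
  rw [Finset.sum_congr rfl (fun j _ => hrow j)]
  have h2 : ∑ j, (mloc Am x j + Am j i * (c - x i)) * u j
      = (∑ j, (mloc Am x j + Am j i * (c - x i)) * x j)
        + (mloc Am x i + Am i i * (c - x i)) * (c - x i) := by
    exact sum_mul_update (fun j => mloc Am x j + Am j i * (c - x i)) x i c
  rw [h2, Finset.sum_congr rfl (fun j (_ : j ∈ Finset.univ) =>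
    show (mloc Am x j + Am j i * (c - x i)) * x j
        = mloc Am x j * x j + (c - x i) * (Am j i * x j) by ring),
    Finset.sum_add_distrib, ← Finset.mul_sum]
  have h3 : ∑ j, mloc Am x j * x j = ∑ j, ∑ k, Am j k * x j * x k := by
    refine Finset.sum_congr rfl (fun j _ => ?_)
    unfold mloc
    rw [Finset.sum_mul]
    exact Finset.sum_congr rfl (fun k _ => by ring)
  have h4 : ∑ j, Am j i * x j = mloc Am x i := by
    unfold mloc
    refine Finset.sum_congr rfl (fun j _ => ?_)
    rw [show Am j i = Am i j by rw [← hs.apply]]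
  rw [h3, h4]
  ring

/-- flip of a Boolean configuration at one site -/
def bflip (i : Fin n) (σ : Fin n → Bool) : Fin n → Bool := Function.update σ i (!σ i)

lemma bflip_invol (i : Fin n) (σ : Fin n → Bool) : bflip i (bflip i σ) = σ := by
  funext j
  unfold bflip
  rcases eq_or_ne j i with rfl | hj
  · simp
  · simp [Function.update_of_ne hj]

lemma spin_bflip (i : Fin n) (σ : Fin n → Bool) :
    spinVec n (bflip i σ) = Function.update (spinVec n σ) i (-(spinVec n σ i)) := by
  funext j
  rcases eq_or_ne j i with rfl | hj
  · unfold bflip spinVec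
    simp only [Function.update_self]
    cases h : σ j <;> simp [h]
  · unfold bflip spinVec
    simp [Function.update_of_ne hj]

lemma sum_bflip (i : Fin n) (F : (Fin n → Bool) → ℝ) :
    ∑ σ : Fin n → Bool, F (bflip i σ) = ∑ σ : Fin n → Bool, F σ := by
  exact Function.Bijective.sum_comp
    (Function.Involutive.bijective (bflip_invol i)) F

lemma sum_zero_of_antisym (i : Fin n) (F : (Fin n → Bool) → ℝ)
    (h : ∀ σ, F (bflip i σ) = -F σ) :
    ∑ σ : Fin n → Bool, F σ = 0 := by
  have h1 : ∑ σ : Fin n → Bool, F σ = ∑ σ : Fin n → Bool, -F σ := by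
    rw [← sum_bflip i F]
    exact Finset.sum_congr rfl (fun σ _ => h σ)
  rw [Finset.sum_neg_distrib] at h1
  linarith

lemma spin_cases (σ : Fin n → Bool) (i : Fin n) :
    spinVec n σ i = 1 ∨ spinVec n σ i = -1 := by
  unfold spinVec; by_cases h : σ i <;> simp [h]

lemma abs_spin (σ : Fin n → Bool) (i : Fin n) : |spinVec n σ i| = 1 := by
  rcases spin_cases σ i with h | h <;> rw [h] <;> simp

lemma isingWt_pos (Am : Matrix (Fin n) (Fin n) ℝ) (β B : ℝ) (x : Fin n → ℝ) :
    0 < isingWt Am β B x := Real.exp_pos _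

lemma isingWt_flip (Am : Matrix (Fin n) (Fin n) ℝ) (hs : Am.IsSymm)
    (hd : ∀ i : Fin n, Am i i = 0) (β B : ℝ) (σ : Fin n → Bool) (i : Fin n) :
    isingWt Am β B (spinVec n (bflip i σ)) =
      isingWt Am β B (spinVec n σ) *
        Real.exp (-(2 * spinVec n σ i * (β * mloc Am (spinVec n σ) i + B))) := by
  set x := spinVec n σ with hx
  rw [spin_bflip]
  unfold isingWt
  rw [← Real.exp_add]
  congr 1
  rw [quad_update Am hs x i (-(x i)), sum_update x i (-(x i)), hd i]
  ring

lemma key_pointwise {s h : ℝ} (hs : s = 1 ∨ s = -1) :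
    (-s - Real.tanh h) * Real.exp (-(2 * s * h)) = -(s - Real.tanh h) := by
  have hE := Real.exp_ne_zero h
  have hme : Real.exp (-h) = (Real.exp h)⁻¹ := Real.exp_neg h
  have hch : Real.cosh h ≠ 0 := (Real.cosh_pos h).ne'
  rcases hs with rfl | rfl
  · rw [show -(2 * (1:ℝ) * h) = -h + -h by ring, Real.exp_add,
      Real.tanh_eq_sinh_div_cosh, Real.sinh_eq, Real.cosh_eq, hme]
    field_simp
    ring
  · rw [show -(2 * (-1:ℝ) * h) = h + h by ring, Real.exp_add,
      Real.tanh_eq_sinh_div_cosh, Real.sinh_eq, Real.cosh_eq, hme]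
    field_simp
    ring

/-- antisymmetry of `ε_i · wt` under flipping site `i` -/
lemma eps_wt_antisym (Am : Matrix (Fin n) (Fin n) ℝ) (hs : Am.IsSymm)
    (hd : ∀ i : Fin n, Am i i = 0) (β B : ℝ) (σ : Fin n → Bool) (i : Fin n) :
    (spinVec n (bflip i σ) i - Real.tanh (β * mloc Am (spinVec n (bflip i σ)) i + B)) *
        isingWt Am β B (spinVec n (bflip i σ)) =
      -((spinVec n σ i - Real.tanh (β * mloc Am (spinVec n σ) i + B)) *
        isingWt Am β B (spinVec n σ)) := by
  set x := spinVec n σ with hx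
  have hm : mloc Am (spinVec n (bflip i σ)) i = mloc Am x i := by
    rw [spin_bflip, ← hx, mloc_update_self Am (hd i)]
  have hv : spinVec n (bflip i σ) i = -(x i) := by
    rw [spin_bflip, ← hx, Function.update_self]
  rw [hm, hv, isingWt_flip Am hs hd β B σ i, ← hx]
  have := key_pointwise (h := β * mloc Am x i + B) (spin_cases σ i)
  nlinarith [this, isingWt_pos Am β B x]

section Cov

variable (Am : Matrix (Fin n) (Fin n) ℝ) (β B : ℝ)

/-- `ε_i(σ)` -/
def epsf (i : Fin n) (σ : Fin n → Bool) : ℝ :=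
  spinVec n σ i - Real.tanh (β * mloc Am (spinVec n σ) i + B)

lemma abs_epsf_le (i : Fin n) (σ : Fin n → Bool) : |epsf Am β B i σ| ≤ 2 := by
  unfold epsf
  calc |spinVec n σ i - Real.tanh (β * mloc Am (spinVec n σ) i + B)|
      ≤ |spinVec n σ i| + |Real.tanh (β * mloc Am (spinVec n σ) i + B)| := abs_sub _ _
  _ ≤ 1 + 1 := by
      refine add_le_add (le_of_eq (abs_spin σ i)) (abs_tanh_lt_one _).le
  _ = 2 := by norm_num

lemma sum_eps_g_zero (hs : Am.IsSymm) (hd : ∀ i : Fin n, Am i i = 0) (i : Fin n)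
    (g : (Fin n → Bool) → ℝ) (hg : ∀ σ, g (bflip i σ) = g σ) :
    ∑ σ : Fin n → Bool, epsf Am β B i σ * g σ * isingWt Am β B (spinVec n σ) = 0 := by
  apply sum_zero_of_antisym i
  intro σ
  have h1 := eps_wt_antisym Am hs hd β B σ i
  unfold epsf
  rw [hg σ]
  linear_combination g σ * h1

lemma cov_bound (hs : Am.IsSymm) (hd : ∀ i : Fin n, Am i i = 0)
    (hnn : ∀ i j : Fin n, 0 ≤ Am i j) (hβ : 0 ≤ β) (i j : Fin n) (hij : i ≠ j) :
    |∑ σ : Fin n → Bool, epsf Am β B i σ * epsf Am β B j σ * isingWt Am β B (spinVec n σ)|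
      ≤ 4 * β * Am i j * ∑ σ : Fin n → Bool, isingWt Am β B (spinVec n σ) := by
  set g : (Fin n → Bool) → ℝ := fun σ =>
    spinVec n σ j - Real.tanh (β * (mloc Am (spinVec n σ) j - Am j i * spinVec n σ i) + B)
    with hgdef
  have hg : ∀ σ, g (bflip i σ) = g σ := by
    intro σ
    set x := spinVec n σ with hx
    have h1 : spinVec n (bflip i σ) = Function.update x i (-(x i)) := spin_bflip i σ
    have h2 : spinVec n (bflip i σ) j = x j := by
      rw [h1, Function.update_of_ne (Ne.symm hij)]
    have h3 : mloc Am (spinVec n (bflip i σ)) j = mloc Am x j + Am j i * (-(x i) - x i) := by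
      rw [h1, mloc_update]
    have h4 : spinVec n (bflip i σ) i = -(x i) := by rw [h1, Function.update_self]
    rw [hgdef]
    simp only [h2, h3, h4]
    congr 2
    ring
  have hzero := sum_eps_g_zero Am β B hs hd i g hg
  have hsplit : ∀ σ : Fin n → Bool,
      epsf Am β B i σ * epsf Am β B j σ * isingWt Am β B (spinVec n σ)
        = epsf Am β B i σ * (epsf Am β B j σ - g σ) * isingWt Am β B (spinVec n σ)
          + epsf Am β B i σ * g σ * isingWt Am β B (spinVec n σ) := by
    intro σ; ring
  rw [Finset.sum_congr rfl (fun σ _ => hsplit σ), Finset.sum_add_distrib, hzero, add_zero]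
  have hterm : ∀ σ : Fin n → Bool,
      |epsf Am β B i σ * (epsf Am β B j σ - g σ) * isingWt Am β B (spinVec n σ)|
        ≤ 4 * β * Am i j * isingWt Am β B (spinVec n σ) := by
    intro σ
    have hub : |epsf Am β B j σ - g σ| ≤ 2 * (β * Am i j) := by
      have : epsf Am β B j σ - g σ
          = Real.tanh (β * (mloc Am (spinVec n σ) j - Am j i * spinVec n σ i) + B)
            - Real.tanh (β * mloc Am (spinVec n σ) j + B) := by
        unfold epsf; rw [hgdef]; ring
      rw [this]
      refine (abs_tanh_sub_tanh_le _ _).trans ?_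
      have he : β * (mloc Am (spinVec n σ) j - Am j i * spinVec n σ i) + B
          - (β * mloc Am (spinVec n σ) j + B) = -(β * Am j i * spinVec n σ i) := by ring
      rw [he, abs_neg, abs_mul, abs_spin, mul_one, abs_mul,
        abs_of_nonneg hβ, abs_of_nonneg (hnn j i),
        show Am j i = Am i j by rw [← hs.apply]]
    rw [abs_mul, abs_mul, abs_of_pos (isingWt_pos Am β B _)]
    have h2 := abs_epsf_le Am β B i σ
    have hw := (isingWt_pos Am β B (spinVec n σ)).le
    have habs : (0:ℝ) ≤ |epsf Am β B j σ - g σ| := abs_nonneg _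
    have hmm : |epsf Am β B i σ| * |epsf Am β B j σ - g σ| ≤ 2 * (2 * (β * Am i j)) :=
      mul_le_mul h2 hub habs (by norm_num)
    have := mul_le_mul_of_nonneg_right hmm hw
    nlinarith [this]
  calc |∑ σ : Fin n → Bool, epsf Am β B i σ * (epsf Am β B j σ - g σ)
          * isingWt Am β B (spinVec n σ)|
      ≤ ∑ σ : Fin n → Bool, |epsf Am β B i σ * (epsf Am β B j σ - g σ)
          * isingWt Am β B (spinVec n σ)| := Finset.abs_sum_le_sum_abs _ _
  _ ≤ ∑ σ : Fin n → Bool, 4 * β * Am i j * isingWt Am β B (spinVec n σ) :=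
      Finset.sum_le_sum (fun σ _ => hterm σ)
  _ = 4 * β * Am i j * ∑ σ : Fin n → Bool, isingWt Am β B (spinVec n σ) := by
      rw [Finset.mul_sum]

lemma second_moment (hs : Am.IsSymm) (hd : ∀ i : Fin n, Am i i = 0)
    (hnn : ∀ i j : Fin n, 0 ≤ Am i j) (hβ : 0 ≤ β) (γ : ℝ)
    (hγ : ∀ i : Fin n, (∑ j, Am i j) ≤ γ) :
    ∑ σ : Fin n → Bool, (Rfun Am β B (spinVec n σ))^2 * isingWt Am β B (spinVec n σ)
      ≤ (4 + 4*β*γ) * n * ∑ σ : Fin n → Bool, isingWt Am β B (spinVec n σ) := by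
  set Z := ∑ σ : Fin n → Bool, isingWt Am β B (spinVec n σ) with hZ
  have hZpos : 0 < Z := Finset.sum_pos (fun σ _ => isingWt_pos Am β B _) ⟨fun _ => true, Finset.mem_univ _⟩
  have hexp : ∀ σ : Fin n → Bool, (Rfun Am β B (spinVec n σ))^2 * isingWt Am β B (spinVec n σ)
      = ∑ i, ∑ j, epsf Am β B i σ * epsf Am β B j σ * isingWt Am β B (spinVec n σ) := by
    intro σ
    have h1 : Rfun Am β B (spinVec n σ) = ∑ i, epsf Am β B i σ := rfl
    rw [h1, sq, Finset.sum_mul_sum]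
    rw [Finset.sum_mul]
    refine Finset.sum_congr rfl (fun i _ => ?_)
    rw [Finset.sum_mul]
  rw [Finset.sum_congr rfl (fun σ _ => hexp σ), Finset.sum_comm]
  have hswap : ∀ i : Fin n, ∑ σ : Fin n → Bool, ∑ j,
      epsf Am β B i σ * epsf Am β B j σ * isingWt Am β B (spinVec n σ)
      = ∑ j, ∑ σ : Fin n → Bool,
        epsf Am β B i σ * epsf Am β B j σ * isingWt Am β B (spinVec n σ) :=
    fun i => Finset.sum_comm
  rw [Finset.sum_congr rfl (fun i _ => hswap i)]
  have hij : ∀ i j : Fin n,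
      ∑ σ : Fin n → Bool, epsf Am β B i σ * epsf Am β B j σ * isingWt Am β B (spinVec n σ)
        ≤ (if i = j then 4 * Z else 0) + 4 * β * Am i j * Z := by
    intro i j
    rcases eq_or_ne i j with rfl | hne
    · simp only [eq_self_iff_true, if_true]
      have h1 : ∑ σ : Fin n → Bool, epsf Am β B i σ * epsf Am β B i σ
            * isingWt Am β B (spinVec n σ) ≤ ∑ σ : Fin n → Bool, 4 * isingWt Am β B (spinVec n σ) := by
        refine Finset.sum_le_sum (fun σ _ => ?_)
        have h2 := abs_epsf_le Am β B i σ
        have hw := (isingWt_pos Am β B (spinVec n σ)).le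
        have h3 : epsf Am β B i σ * epsf Am β B i σ ≤ 4 := by
          rw [← abs_mul_abs_self (epsf Am β B i σ)]
          nlinarith [abs_nonneg (epsf Am β B i σ)]
        exact mul_le_mul_of_nonneg_right h3 hw
      rw [← Finset.mul_sum] at h1
      have hnn2 : (0:ℝ) ≤ 4 * β * Am i i * Z :=
        mul_nonneg (mul_nonneg (mul_nonneg (by norm_num : (0:ℝ) ≤ 4) hβ) (hnn i i)) hZpos.le
      linarith
    · simp only [if_neg hne, zero_add]
      exact (le_abs_self _).trans (cov_bound Am β B hs hd hnn hβ i j hne)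
  calc ∑ i, ∑ j, ∑ σ : Fin n → Bool,
        epsf Am β B i σ * epsf Am β B j σ * isingWt Am β B (spinVec n σ)
      ≤ ∑ i, ∑ j, ((if i = j then 4 * Z else 0) + 4 * β * Am i j * Z) :=
        Finset.sum_le_sum (fun i _ => Finset.sum_le_sum (fun j _ => hij i j))
  _ = ∑ i : Fin n, (4 * Z + 4 * β * (∑ j, Am i j) * Z) := by
        refine Finset.sum_congr rfl (fun i _ => ?_)
        rw [Finset.sum_add_distrib, Finset.sum_ite_eq Finset.univ i (fun _ => 4 * Z)]
        simp only [Finset.mem_univ, if_pos]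
        congr 1
        rw [Finset.sum_congr rfl (fun j (_ : j ∈ Finset.univ) =>
          show 4*β*Am i j*Z = (4*β*Z)*Am i j by ring), ← Finset.mul_sum]
        ring
  _ ≤ ∑ i : Fin n, (4 * Z + 4 * β * γ * Z) := by
        refine Finset.sum_le_sum (fun i _ => ?_)
        have := hγ i
        nlinarith [mul_nonneg (mul_nonneg (by norm_num : (0:ℝ) ≤ 4) hβ) hZpos.le]
  _ = (4 + 4*β*γ) * n * Z := by
        rw [Finset.sum_const, Finset.card_univ, Fintype.card_fin]
        push_cast
        ring

end Cov

section Det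

variable (Am : Matrix (Fin n) (Fin n) ℝ)

lemma mloc_spin_bound (hnn : ∀ i j : Fin n, 0 ≤ Am i j) {γ : ℝ}
    (hγ : ∀ i : Fin n, (∑ j, Am i j) ≤ γ) (σ : Fin n → Bool) (i : Fin n) :
    |mloc Am (spinVec n σ) i| ≤ γ := by
  unfold mloc
  refine (Finset.abs_sum_le_sum_abs _ _).trans ?_
  refine le_trans (Finset.sum_le_sum (fun j (_ : j ∈ Finset.univ) => ?_)) (hγ i)
  rw [abs_mul, abs_spin, mul_one, abs_of_nonneg (hnn i j)]

lemma continuous_tanh' : Continuous Real.tanh := by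
  rw [show Real.tanh = fun y => Real.sinh y / Real.cosh y from funext Real.tanh_eq_sinh_div_cosh]
  exact Real.continuous_sinh.div Real.continuous_cosh (fun y => (Real.cosh_pos y).ne')

lemma rfun_continuous (β : ℝ) (x : Fin n → ℝ) : Continuous fun b => Rfun Am β b x := by
  unfold Rfun
  refine continuous_finset_sum _ (fun i _ => ?_)
  exact continuous_const.sub (continuous_tanh'.comp (continuous_const.add continuous_id))

lemma rfun_strictAnti (hn : 0 < n) (β : ℝ) (x : Fin n → ℝ) :
    StrictAnti (fun b => Rfun Am β b x) := by
  intro b b' hb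
  unfold Rfun
  refine Finset.sum_lt_sum_of_nonempty ⟨⟨0, hn⟩, Finset.mem_univ _⟩ (fun i _ => ?_)
  have := tanh_strictMono (show β * mloc Am x i + b < β * mloc Am x i + b' by linarith)
  linarith

lemma root_unique (hn : 0 < n) (β : ℝ) (x : Fin n → ℝ) {b b' : ℝ}
    (h : Rfun Am β b x = 0) (h' : Rfun Am β b' x = 0) : b' = b :=
  (rfun_strictAnti Am hn β x).injective (h'.trans h.symm)

lemma root_localize (β B₀ γ : ℝ) (hβ : 0 ≤ β) (hγ0 : 0 ≤ γ)
    (x : Fin n → ℝ) (hm : ∀ i, |mloc Am x i| ≤ γ)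
    (t₀ : ℝ) (ht0 : 0 < t₀) (ht1 : t₀ ≤ 1)
    (hR : |Rfun Am β B₀ x| ≤ n * (t₀ / (Real.cosh (β*γ + |B₀| + 1))^2)) :
    ∃ b, Rfun Am β b x = 0 ∧ |b - B₀| ≤ t₀ := by
  set H := β*γ + |B₀| + 1 with hHdef
  have hH0 : 0 ≤ H := by positivity
  have hch := Real.cosh_pos H
  have hcosh : ∀ c : ℝ, |c - B₀| ≤ t₀ → ∀ i, Real.cosh (β * mloc Am x i + c) ≤ Real.cosh H := by
    intro c hc i
    apply Real.cosh_le_cosh.2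
    rw [abs_of_nonneg hH0]
    have h1 : |β * mloc Am x i| ≤ β * γ := by
      rw [abs_mul, abs_of_nonneg hβ]
      exact mul_le_mul_of_nonneg_left (hm i) hβ
    have h2 : |c| ≤ |B₀| + t₀ := by
      have := abs_sub_abs_le_abs_sub c B₀
      linarith
    calc |β * mloc Am x i + c| ≤ |β * mloc Am x i| + |c| := abs_add_le _ _
    _ ≤ β * γ + (|B₀| + t₀) := add_le_add h1 h2
    _ ≤ H := by rw [hHdef]; linarith
  set κ := t₀ / (Real.cosh H)^2 with hκdef
  have hκ0 : 0 < κ := by positivity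
  have keyup : ∀ i, κ ≤ Real.tanh (β * mloc Am x i + (B₀ + t₀))
      - Real.tanh (β * mloc Am x i + B₀) := by
    intro i
    have h1 := tanh_sub_tanh_ge
      (show β * mloc Am x i + B₀ ≤ β * mloc Am x i + (B₀ + t₀) by linarith)
    have h2 : β * mloc Am x i + (B₀ + t₀) - (β * mloc Am x i + B₀) = t₀ := by ring
    rw [h2] at h1
    refine le_trans ?_ h1
    rw [hκdef]
    apply div_le_div_of_nonneg_left ht0.le
    · exact mul_pos (Real.cosh_pos _) (Real.cosh_pos _)
    · calc Real.cosh (β * mloc Am x i + (B₀ + t₀)) * Real.cosh (β * mloc Am x i + B₀)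
          ≤ Real.cosh H * Real.cosh H := by
            apply mul_le_mul
              (hcosh _ (by rw [show B₀ + t₀ - B₀ = t₀ by ring, abs_of_nonneg ht0.le]) i)
              (hcosh _ (by simp [ht0.le]) i) (Real.cosh_pos _).le (Real.cosh_pos _).le
      _ = (Real.cosh H)^2 := by ring
  have keylo : ∀ i, κ ≤ Real.tanh (β * mloc Am x i + B₀)
      - Real.tanh (β * mloc Am x i + (B₀ - t₀)) := by
    intro i
    have h1 := tanh_sub_tanh_ge
      (show β * mloc Am x i + (B₀ - t₀) ≤ β * mloc Am x i + B₀ by linarith)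
    have h2 : β * mloc Am x i + B₀ - (β * mloc Am x i + (B₀ - t₀)) = t₀ := by ring
    rw [h2] at h1
    refine le_trans ?_ h1
    rw [hκdef]
    apply div_le_div_of_nonneg_left ht0.le
    · exact mul_pos (Real.cosh_pos _) (Real.cosh_pos _)
    · calc Real.cosh (β * mloc Am x i + B₀) * Real.cosh (β * mloc Am x i + (B₀ - t₀))
          ≤ Real.cosh H * Real.cosh H := by
            apply mul_le_mul (hcosh _ (by simp [ht0.le]) i)
              (hcosh _ (by rw [show B₀ - t₀ - B₀ = -t₀ by ring, abs_neg, abs_of_nonneg ht0.le]) i)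
              (Real.cosh_pos _).le (Real.cosh_pos _).le
      _ = (Real.cosh H)^2 := by ring
  have hsumup : (n:ℝ) * κ ≤ ∑ i, (Real.tanh (β * mloc Am x i + (B₀ + t₀))
      - Real.tanh (β * mloc Am x i + B₀)) := by
    calc (n:ℝ) * κ = ∑ _i : Fin n, κ := by
          rw [Finset.sum_const, Finset.card_univ, Fintype.card_fin, nsmul_eq_mul]
    _ ≤ _ := Finset.sum_le_sum (fun i _ => keyup i)
  have hsumlo : (n:ℝ) * κ ≤ ∑ i, (Real.tanh (β * mloc Am x i + B₀)
      - Real.tanh (β * mloc Am x i + (B₀ - t₀))) := by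
    calc (n:ℝ) * κ = ∑ _i : Fin n, κ := by
          rw [Finset.sum_const, Finset.card_univ, Fintype.card_fin, nsmul_eq_mul]
    _ ≤ _ := Finset.sum_le_sum (fun i _ => keylo i)
  have hdiffup : Rfun Am β (B₀ + t₀) x = Rfun Am β B₀ x
      - ∑ i, (Real.tanh (β * mloc Am x i + (B₀ + t₀)) - Real.tanh (β * mloc Am x i + B₀)) := by
    unfold Rfun
    rw [← Finset.sum_sub_distrib]
    exact Finset.sum_congr rfl (fun i _ => by ring)
  have hdifflo : Rfun Am β (B₀ - t₀) x = Rfun Am β B₀ x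
      + ∑ i, (Real.tanh (β * mloc Am x i + B₀) - Real.tanh (β * mloc Am x i + (B₀ - t₀))) := by
    unfold Rfun
    rw [← Finset.sum_add_distrib]
    exact Finset.sum_congr rfl (fun i _ => by ring)
  have habs := abs_le.1 hR
  have hup : Rfun Am β (B₀ + t₀) x ≤ 0 := by
    rw [hdiffup]
    have : (n:ℝ) * (t₀ / (Real.cosh H)^2) = (n:ℝ) * κ := by rw [hκdef]
    linarith [hsumup, habs.2, this ▸ habs.2]
  have hlo : 0 ≤ Rfun Am β (B₀ - t₀) x := by
    rw [hdifflo]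
    linarith [hsumlo, habs.1]
  have hmem : (0:ℝ) ∈ Set.Icc (Rfun Am β (B₀ + t₀) x) (Rfun Am β (B₀ - t₀) x) := ⟨hup, hlo⟩
  have hsub := intermediate_value_Icc' (show B₀ - t₀ ≤ B₀ + t₀ by linarith)
    ((rfun_continuous Am β x).continuousOn)
  obtain ⟨b, hbmem, hb0⟩ := hsub hmem
  exact ⟨b, hb0, abs_le.2 ⟨by linarith [hbmem.1], by linarith [hbmem.2]⟩⟩

lemma mloc_neg (x : Fin n → ℝ) (i : Fin n) :
    mloc Am (fun k => -(x k)) i = -(mloc Am x i) := by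
  unfold mloc
  rw [← Finset.sum_neg_distrib]
  exact Finset.sum_congr rfl (fun k _ => by ring)

lemma rfun_neg (β b : ℝ) (x : Fin n → ℝ) :
    Rfun Am β (-b) (fun k => -(x k)) = -(Rfun Am β b x) := by
  unfold Rfun
  rw [← Finset.sum_neg_distrib]
  refine Finset.sum_congr rfl (fun i _ => ?_)
  rw [mloc_neg]
  rw [show β * -(mloc Am x i) + -b = -(β * mloc Am x i + b) by ring, Real.tanh_neg]
  ring

lemma spin_not (σ : Fin n → Bool) :
    spinVec n σ = fun k => -(spinVec n (fun j => !σ j) k) := by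
  funext k
  unfold spinVec
  cases h : σ k <;> simp [h]

lemma rfun_neg_at (β γ : ℝ) (hβ : 0 ≤ β) (σ : Fin n → Bool)
    (hm : ∀ i, |mloc Am (spinVec n σ) i| ≤ γ)
    (j0 : Fin n) (hj0 : σ j0 = false) :
    Rfun Am β (β*γ + (n:ℝ)) (spinVec n σ) < 0 := by
  have hn : 0 < n := j0.pos
  set x := spinVec n σ with hx
  have hxj0 : x j0 = -1 := by rw [hx]; unfold spinVec; simp [hj0]
  set s := β*γ + (n:ℝ) with hs
  have hn1 : (1:ℝ) ≤ n := by exact_mod_cast hn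
  have htn : 0 ≤ Real.tanh (n:ℝ) := by
    rw [← Real.tanh_zero]
    exact tanh_strictMono.monotone (by positivity)
  have hbound : ∀ i, x i - Real.tanh (β * mloc Am x i + s)
      ≤ (1 - Real.tanh (n:ℝ)) + (if i = j0 then -2 else 0) := by
    intro i
    have hti : Real.tanh ((n:ℝ)) ≤ Real.tanh (β * mloc Am x i + s) := by
      apply tanh_strictMono.monotone
      have h1 := (abs_le.1 (hm i)).1
      have h2 : -(β*γ) ≤ β * mloc Am x i := by nlinarith
      rw [hs]; linarith
    rcases eq_or_ne i j0 with rfl | hij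
    · rw [if_pos rfl, hxj0]; linarith
    · rw [if_neg hij]
      have hx1 : x i ≤ 1 := by
        have := abs_spin σ i
        rw [← hx] at this
        linarith [(abs_le.1 this.le).2]
      linarith
  have hsum : Rfun Am β s x ≤ (n:ℝ)*(1 - Real.tanh (n:ℝ)) - 2 := by
    unfold Rfun
    calc ∑ i, (x i - Real.tanh (β * mloc Am x i + s))
        ≤ ∑ i, ((1 - Real.tanh (n:ℝ)) + (if i = j0 then (-2:ℝ) else 0)) :=
          Finset.sum_le_sum fun i _ => hbound i
    _ = (n:ℝ)*(1-Real.tanh (n:ℝ)) - 2 := by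
        rw [Finset.sum_add_distrib, Finset.sum_const, Finset.card_univ, Fintype.card_fin,
          nsmul_eq_mul, Finset.sum_ite_eq' Finset.univ j0 (fun _ => (-2:ℝ))]
        simp only [Finset.mem_univ, if_true]
        ring
  have hsmall : (n:ℝ)*(1 - Real.tanh (n:ℝ)) < 2 := by
    have h1 := one_sub_tanh_le (n:ℝ)
    have h2 : (n:ℝ) + 1 ≤ Real.exp (n:ℝ) := Real.add_one_le_exp _
    have h3 : Real.exp (-(2*(n:ℝ))) * (Real.exp (n:ℝ))^2 = 1 := by
      rw [show ((Real.exp ((n:ℝ)))^2 : ℝ) = Real.exp ((n:ℝ) + (n:ℝ)) by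
        rw [Real.exp_add]; ring, ← Real.exp_add, show -(2*(n:ℝ)) + ((n:ℝ) + (n:ℝ)) = 0 by ring,
        Real.exp_zero]
    have hen : 0 < Real.exp ((n:ℝ)) := Real.exp_pos _
    have hmain : (n:ℝ) * Real.exp (-(2*(n:ℝ))) < 1 := by
      rw [show (1:ℝ) = Real.exp (-(2*(n:ℝ))) * (Real.exp (n:ℝ))^2 from h3.symm]
      have := Real.exp_pos (-(2*(n:ℝ)))
      have hlt : (n:ℝ) < (Real.exp (n:ℝ))^2 := by nlinarith
      nlinarith
    nlinarith [Real.exp_pos (-(2*(n:ℝ))), (by positivity : (0:ℝ) ≤ (n:ℝ))]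
  linarith

lemma root_exists_nonconst (β γ : ℝ) (hβ : 0 ≤ β) (σ : Fin n → Bool)
    (hm : ∀ i, |mloc Am (spinVec n σ) i| ≤ γ)
    (i0 j0 : Fin n) (hi0 : σ i0 = true) (hj0 : σ j0 = false) :
    ∃! b : ℝ, Rfun Am β b (spinVec n σ) = 0 := by
  have hn : 0 < n := j0.pos
  set s := β*γ + (n:ℝ) with hs
  have hup : Rfun Am β s (spinVec n σ) < 0 := rfun_neg_at Am β γ hβ σ hm j0 hj0
  have hlo : 0 < Rfun Am β (-s) (spinVec n σ) := by
    have hm' : ∀ i, |mloc Am (spinVec n (fun j => !σ j)) i| ≤ γ := by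
      intro i
      have hsp : spinVec n (fun j => !σ j) = fun k => -(spinVec n σ k) := by
        rw [spin_not (fun j => !σ j)]
        simp
      rw [hsp, mloc_neg, abs_neg]
      exact hm i
    have h1 : Rfun Am β s (spinVec n (fun j => !σ j)) < 0 :=
      rfun_neg_at Am β γ hβ (fun j => !σ j) hm' i0 (by simp [hi0])
    have h2 : Rfun Am β (-s) (spinVec n σ) = -(Rfun Am β s (spinVec n (fun j => !σ j))) := by
      rw [spin_not σ, rfun_neg]
    rw [h2]
    linarith
  have hss : -s ≤ s := by
    have hn1 : (1:ℝ) ≤ n := by exact_mod_cast hn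
    have hγ0 : 0 ≤ γ := le_trans (abs_nonneg _) (hm j0)
    have hβγ : 0 ≤ β * γ := mul_nonneg hβ hγ0
    rw [hs]; linarith
  have hmem : (0:ℝ) ∈ Set.Icc (Rfun Am β s (spinVec n σ)) (Rfun Am β (-s) (spinVec n σ)) :=
    ⟨hup.le, hlo.le⟩
  obtain ⟨b, _, hb0⟩ := intermediate_value_Icc' hss
    ((rfun_continuous Am β (spinVec n σ)).continuousOn) hmem
  exact ⟨b, hb0, fun b' hb' => root_unique Am hn β (spinVec n σ) hb0 hb'⟩

end Det

section Prob

variable (Am : Matrix (Fin n) (Fin n) ℝ) (β B : ℝ)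

lemma Zpos : 0 < ∑ σ : Fin n → Bool, isingWt Am β B (spinVec n σ) :=
  Finset.sum_pos (fun σ _ => isingWt_pos Am β B _) ⟨fun _ => true, Finset.mem_univ _⟩

lemma isingProb_nonneg (E : Set (Fin n → ℝ)) : 0 ≤ isingProb Am β B E := by
  unfold isingProb
  apply div_nonneg
  · exact Finset.sum_nonneg fun σ _ =>
      Set.indicator_apply_nonneg (fun _ => (isingWt_pos Am β B _).le)
  · exact Finset.sum_nonneg fun σ _ => (isingWt_pos Am β B _).le

lemma isingProb_le_one (E : Set (Fin n → ℝ)) : isingProb Am β B E ≤ 1 := by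
  unfold isingProb
  rw [div_le_one (Zpos Am β B)]
  refine Finset.sum_le_sum fun σ _ => ?_
  exact Set.indicator_apply_le' (fun _ => le_refl _) (fun _ => (isingWt_pos Am β B _).le)

lemma isingProb_le_bound (E : Set (Fin n → ℝ)) (φ : (Fin n → Bool) → ℝ)
    (hφ : ∀ σ, spinVec n σ ∈ E → isingWt Am β B (spinVec n σ) ≤ φ σ)
    (hφ0 : ∀ σ, 0 ≤ φ σ) :
    isingProb Am β B E ≤ (∑ σ : Fin n → Bool, φ σ)
      / (∑ σ : Fin n → Bool, isingWt Am β B (spinVec n σ)) := by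
  unfold isingProb
  rw [div_le_div_iff_of_pos_right (Zpos Am β B)]
  refine Finset.sum_le_sum fun σ _ => ?_
  exact Set.indicator_apply_le' (fun h => hφ σ h) (fun _ => hφ0 σ)

end Prob

end Stmt10Aux

set_option maxHeartbeats 1600000 in
/-- with `β` known, `R_n(β,B|X) = 0` has a unique root with probability tending
to one, and the root is `√n`-consistent for `B₀`. -/
theorem stmt10 (A : (n : ℕ) → Matrix (Fin n) (Fin n) ℝ)
    (hsymm : ∀ n, (A n).IsSymm)
    (hnonneg : ∀ n, ∀ i j : Fin n, 0 ≤ A n i j)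
    (hdiag : ∀ n, ∀ i : Fin n, A n i i = 0)
    (hBD : ∃ γ : ℝ, ∀ n, ∀ i : Fin n, (∑ j, A n i j) ≤ γ)
    (hNT : 0 < liminf (fun n : ℕ => (1 / (n : ℝ)) * ∑ i, ∑ j, A n i j) atTop)
    (β B₀ : ℝ) (hβ : 0 < β) (hB : B₀ ≠ 0) :
    Tendsto (fun n : ℕ => isingProb (A n) β B₀
        {x | ∃! b : ℝ, Rfun (A n) β b x = 0}) atTop (nhds 1) ∧
    ∀ ε > (0 : ℝ), ∃ M : ℝ,
      limsup (fun n : ℕ => isingProb (A n) β B₀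
        {x | ¬ ∃ b : ℝ, Rfun (A n) β b x = 0 ∧
          (∀ b' : ℝ, Rfun (A n) β b' x = 0 → b' = b) ∧
          Real.sqrt n * |b - B₀| ≤ M})
        atTop ≤ ε := by
  classical
  open Stmt10Aux in
  obtain ⟨γ₀, hγ₀⟩ := hBD
  set γ := max γ₀ 0 with hγdef
  have hγ : ∀ n, ∀ i : Fin n, (∑ j, A n i j) ≤ γ := fun n i => (hγ₀ n i).trans (le_max_left _ _)
  have hγ0 : (0:ℝ) ≤ γ := le_max_right _ _
  have hmB : ∀ n (σ : Fin n → Bool) (i : Fin n), |mloc (A n) (spinVec n σ) i| ≤ γ :=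
    fun n σ i => Stmt10Aux.mloc_spin_bound (A n) (hnonneg n) (hγ n) σ i
  constructor
  · -- part 1
    set c := Real.exp (-(2*(β*γ + |B₀|))) with hc
    have hcpos : 0 < c := Real.exp_pos _
    have hlow : ∀ n : ℕ, 1 ≤ n →
        1 - 2/((n:ℝ)*c) ≤ isingProb (A n) β B₀ {x | ∃! b : ℝ, Rfun (A n) β b x = 0} := by
      intro n hn
      set E : Set (Fin n → ℝ) := {x | ∃! b : ℝ, Rfun (A n) β b x = 0} with hE
      set wt : (Fin n → Bool) → ℝ := fun σ => isingWt (A n) β B₀ (spinVec n σ) with hwt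
      set Z := ∑ σ : Fin n → Bool, wt σ with hZ
      have hZpos : 0 < Z := Stmt10Aux.Zpos (A n) β B₀
      have hwtpos : ∀ σ, 0 < wt σ := fun σ => Stmt10Aux.isingWt_pos _ _ _ _
      -- bound on the weights of the two constant configurations
      have hconst : ∀ σ0 : Fin n → Bool, (σ0 = fun _ => true) ∨ (σ0 = fun _ => false) →
          (n:ℝ) * c * wt σ0 ≤ Z := by
        intro σ0 hσ0
        have hinj : Function.Injective (fun i : Fin n => bflip i σ0) := by
          intro i i' h
          by_contra hne
          have h1 := congrFun h i
          simp only [Stmt10Aux.bflip] at h1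
          rw [Function.update_self,
            Function.update_of_ne (show i ≠ i' from fun hc' => hne hc')] at h1
          exact Bool.not_ne_self _ h1
        have hflip : ∀ i : Fin n, c * wt σ0 ≤ wt (bflip i σ0) := by
          intro i
          have hw := Stmt10Aux.isingWt_flip (A n) (hsymm n) (hdiag n) β B₀ σ0 i
          show c * isingWt (A n) β B₀ (spinVec n σ0) ≤ isingWt (A n) β B₀ (spinVec n (bflip i σ0))
          rw [hw]
          have hexp : -(2*(β*γ + |B₀|))
              ≤ -(2 * spinVec n σ0 i * (β * mloc (A n) (spinVec n σ0) i + B₀)) := by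
            have hm := hmB n σ0 i
            have hm1 := (abs_le.1 hm).1
            have hm2 := (abs_le.1 hm).2
            have hB1 := neg_abs_le B₀
            have hB2 := le_abs_self B₀
            rcases hσ0 with rfl | rfl
            · have hv : spinVec n (fun _ => true) i = 1 := by unfold spinVec; simp
              rw [hv]
              nlinarith
            · have hv : spinVec n (fun _ => false) i = -1 := by unfold spinVec; simp
              rw [hv]
              nlinarith
          have := Real.exp_le_exp.2 hexp
          rw [← hc] at this
          nlinarith [hwtpos σ0, this, hcpos]
        have himg : ∑ i : Fin n, wt (bflip i σ0)
            = ∑ τ ∈ Finset.univ.image (fun i : Fin n => bflip i σ0), wt τ :=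
          (Finset.sum_image (fun i _ j _ h => hinj h)).symm
        have hle : ∑ i : Fin n, wt (bflip i σ0) ≤ Z := by
          rw [himg, hZ]
          exact Finset.sum_le_sum_of_subset_of_nonneg (Finset.subset_univ _)
            (fun τ _ _ => (hwtpos τ).le)
        calc (n:ℝ) * c * wt σ0 = ∑ _i : Fin n, c * wt σ0 := by
              rw [Finset.sum_const, Finset.card_univ, Fintype.card_fin, nsmul_eq_mul]; ring
        _ ≤ ∑ i : Fin n, wt (bflip i σ0) := Finset.sum_le_sum (fun i _ => hflip i)
        _ ≤ Z := hle
      -- non-constant configurations are in the event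
      have hmemE : ∀ σ : Fin n → Bool, σ ≠ (fun _ => true) → σ ≠ (fun _ => false) →
          spinVec n σ ∈ E := by
        intro σ hp hm'
        obtain ⟨j0, hj0⟩ : ∃ j0, σ j0 = false := by
          by_contra h
          push_neg at h
          exact hp (funext fun i => by
            cases hv : σ i
            · exact absurd hv (h i)
            · rfl)
        obtain ⟨i0, hi0⟩ : ∃ i0, σ i0 = true := by
          by_contra h
          push_neg at h
          exact hm' (funext fun i => by
            cases hv : σ i
            · rfl
            · exact absurd hv (h i))
        exact Stmt10Aux.root_exists_nonconst (A n) β γ hβ.le σ (hmB n σ) i0 j0 hi0 hj0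
      -- lower bound on the probability
      set σp : Fin n → Bool := fun _ => true with hσp
      set σm : Fin n → Bool := fun _ => false with hσm
      have hpm : σp ≠ σm := by
        intro h
        have := congrFun h ⟨0, hn⟩
        simp [hσp, hσm] at this
      have hnum : Z - wt σp - wt σm
          ≤ ∑ σ : Fin n → Bool, E.indicator (isingWt (A n) β B₀) (spinVec n σ) := by
        have hsub : ({σp, σm} : Finset (Fin n → Bool)) ⊆ Finset.univ := Finset.subset_univ _
        have h1 : ∑ σ ∈ Finset.univ \ {σp, σm}, wt σ
            ≤ ∑ σ ∈ Finset.univ \ {σp, σm}, E.indicator (isingWt (A n) β B₀) (spinVec n σ) := by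
          refine Finset.sum_le_sum fun σ hσ => ?_
          rw [Finset.mem_sdiff, Finset.mem_insert, Finset.mem_singleton] at hσ
          push_neg at hσ
          rw [Set.indicator_of_mem (hmemE σ hσ.2.1 hσ.2.2)]
        have h2 : ∑ σ ∈ Finset.univ \ {σp, σm}, wt σ = Z - (wt σp + wt σm) := by
          rw [Finset.sum_sdiff_eq_sub hsub, Finset.sum_pair hpm, hZ]
        have h3 : ∑ σ ∈ Finset.univ \ {σp, σm}, E.indicator (isingWt (A n) β B₀) (spinVec n σ)
            ≤ ∑ σ : Fin n → Bool, E.indicator (isingWt (A n) β B₀) (spinVec n σ) :=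
          Finset.sum_le_sum_of_subset_of_nonneg (Finset.subset_univ _)
            (fun τ _ _ => Set.indicator_apply_nonneg (fun _ => (hwtpos τ).le))
        linarith
      have hd : (0:ℝ) < (n:ℝ) * c := by
        have : (1:ℝ) ≤ (n:ℝ) := by exact_mod_cast hn
        nlinarith
      have hwtp : wt σp ≤ Z / ((n:ℝ)*c) := by
        rw [le_div_iff₀ hd]
        have := hconst σp (Or.inl rfl)
        nlinarith
      have hwtm : wt σm ≤ Z / ((n:ℝ)*c) := by
        rw [le_div_iff₀ hd]
        have := hconst σm (Or.inr rfl)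
        nlinarith
      unfold isingProb
      rw [le_div_iff₀ hZpos]
      have hZd : (2/((n:ℝ)*c)) * Z = 2 * (Z / ((n:ℝ)*c)) := by ring
      nlinarith [hnum, hwtp, hwtm, hZpos]
    have hup : ∀ n : ℕ, isingProb (A n) β B₀ {x | ∃! b : ℝ, Rfun (A n) β b x = 0} ≤ 1 :=
      fun n => Stmt10Aux.isingProb_le_one (A n) β B₀ _
    have htend : Tendsto (fun n : ℕ => 1 - 2/((n:ℝ)*c)) atTop (nhds 1) := by
      have h1 : Tendsto (fun n : ℕ => (2/c)/(n:ℝ)) atTop (nhds 0) :=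
        tendsto_const_div_atTop_nhds_zero_nat (2/c)
      have h2 : Tendsto (fun n : ℕ => 2/((n:ℝ)*c)) atTop (nhds 0) := by
        refine h1.congr (fun n => ?_)
        rw [div_div, mul_comm]
      have := tendsto_const_nhds (x := (1:ℝ)) (f := atTop (α := ℕ)) |>.sub h2
      simpa using this
    refine tendsto_of_tendsto_of_tendsto_of_le_of_le' htend tendsto_const_nhds ?_ ?_
    · filter_upwards [eventually_ge_atTop 1] with n hn
      exact hlow n hn
    · exact Eventually.of_forall hup
  · -- part 2
    intro ε hε
    set ch := Real.cosh (β*γ + |B₀| + 1) with hch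
    have hchpos : 0 < ch := Real.cosh_pos _
    set C := 4 + 4*β*γ with hC
    have hCpos : 0 < C := by nlinarith [mul_nonneg hβ.le hγ0]
    set K := Real.sqrt (C/ε) + 1 with hK
    have hKpos : 0 < K := by positivity
    have hKsq : C ≤ ε * K^2 := by
      have h1 : Real.sqrt (C/ε) ^ 2 = C/ε := Real.sq_sqrt (by positivity)
      have h2 : Real.sqrt (C/ε) ≥ 0 := Real.sqrt_nonneg _
      have h3 : C/ε ≤ K^2 := by rw [hK]; nlinarith
      rw [div_le_iff₀ hε] at h3
      linarith [mul_comm (K^2) ε ▸ h3]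
    set M := K * ch^2 with hM
    refine ⟨M, ?_⟩
    have hbound : ∀ n : ℕ, 1 ≤ n → M ≤ Real.sqrt n →
        isingProb (A n) β B₀
          {x | ¬ ∃ b : ℝ, Rfun (A n) β b x = 0 ∧
            (∀ b' : ℝ, Rfun (A n) β b' x = 0 → b' = b) ∧
            Real.sqrt n * |b - B₀| ≤ M} ≤ ε := by
      intro n hn hM'
      set Ebad : Set (Fin n → ℝ) := {x | ¬ ∃ b : ℝ, Rfun (A n) β b x = 0 ∧
            (∀ b' : ℝ, Rfun (A n) β b' x = 0 → b' = b) ∧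
            Real.sqrt n * |b - B₀| ≤ M} with hEbad
      have hnR : (0:ℝ) < (n:ℝ) := by exact_mod_cast hn
      have hsq : 0 < Real.sqrt n := Real.sqrt_pos.2 hnR
      have hsqsq : Real.sqrt n * Real.sqrt n = (n:ℝ) := Real.mul_self_sqrt hnR.le
      set wt : (Fin n → Bool) → ℝ := fun σ => isingWt (A n) β B₀ (spinVec n σ) with hwt
      set Z := ∑ σ : Fin n → Bool, wt σ with hZ
      have hZpos : 0 < Z := Stmt10Aux.Zpos (A n) β B₀
      -- key: small residual implies good event
      have hkey : ∀ σ : Fin n → Bool,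
          |Rfun (A n) β B₀ (spinVec n σ)| ≤ K * Real.sqrt n → spinVec n σ ∉ Ebad := by
        intro σ hR hbad
        set t₀ := M / Real.sqrt n with ht₀def
        have ht0 : 0 < t₀ := by
          rw [ht₀def, hM]; positivity
        have ht1 : t₀ ≤ 1 := by
          rw [ht₀def, div_le_one hsq]; exact hM'
        have hRt : |Rfun (A n) β B₀ (spinVec n σ)| ≤ (n:ℝ) * (t₀ / ch^2) := by
          have heq : (n:ℝ) * (t₀ / ch^2) = K * Real.sqrt n := by
            rw [ht₀def, hM]
            field_simp
            nlinarith [hsqsq]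
          rw [heq]; exact hR
        obtain ⟨b, hb, hbdist⟩ := Stmt10Aux.root_localize (A n) β B₀ γ hβ.le hγ0
          (spinVec n σ) (fun i => hmB n σ i) t₀ ht0 ht1 (by rw [hch] at hRt; exact hRt)
        refine hbad ⟨b, hb, ?_, ?_⟩
        · exact fun b' hb' => Stmt10Aux.root_unique (A n) hn β (spinVec n σ) hb hb'
        · calc Real.sqrt n * |b - B₀| ≤ Real.sqrt n * t₀ :=
                mul_le_mul_of_nonneg_left hbdist hsq.le
          _ = M := by rw [ht₀def, mul_div_cancel₀ _ hsq.ne']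
      -- Chebyshev bound
      have hKn : 0 < K^2 * (n:ℝ) := by positivity
      have hφ : ∀ σ : Fin n → Bool, spinVec n σ ∈ Ebad →
          isingWt (A n) β B₀ (spinVec n σ) ≤
            (Rfun (A n) β B₀ (spinVec n σ))^2 * isingWt (A n) β B₀ (spinVec n σ) / (K^2 * n) := by
        intro σ hσ
        have hRlarge : K * Real.sqrt n < |Rfun (A n) β B₀ (spinVec n σ)| := by
          by_contra h
          push_neg at h
          exact hkey σ h hσ
        rw [le_div_iff₀ hKn]
        have h0 : 0 ≤ K * Real.sqrt n := by positivity
        have h1 : (K * Real.sqrt n)^2 ≤ (Rfun (A n) β B₀ (spinVec n σ))^2 := by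
          calc (K * Real.sqrt n)^2 ≤ |Rfun (A n) β B₀ (spinVec n σ)|^2 :=
                pow_le_pow_left₀ h0 hRlarge.le 2
          _ = (Rfun (A n) β B₀ (spinVec n σ))^2 := sq_abs _
        have h2 : (K * Real.sqrt n)^2 = K^2 * (n:ℝ) := by
          rw [mul_pow, Real.sq_sqrt hnR.le]
        have hw := (Stmt10Aux.isingWt_pos (A n) β B₀ (spinVec n σ)).le
        nlinarith
      have hφ0 : ∀ σ : Fin n → Bool,
          0 ≤ (Rfun (A n) β B₀ (spinVec n σ))^2 * isingWt (A n) β B₀ (spinVec n σ) / (K^2 * n) := by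
        intro σ
        have := (Stmt10Aux.isingWt_pos (A n) β B₀ (spinVec n σ)).le
        positivity
      have hsum : ∑ σ : Fin n → Bool,
          (Rfun (A n) β B₀ (spinVec n σ))^2 * isingWt (A n) β B₀ (spinVec n σ) / (K^2 * n)
            ≤ (C/K^2) * Z := by
        have hsm := Stmt10Aux.second_moment (A n) β B₀ (hsymm n) (hdiag n) (hnonneg n)
          hβ.le γ (hγ n)
        rw [← Finset.sum_div, div_le_iff₀ hKn]
        calc ∑ σ : Fin n → Bool,
              (Rfun (A n) β B₀ (spinVec n σ))^2 * isingWt (A n) β B₀ (spinVec n σ)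
            ≤ (4 + 4*β*γ) * n * Z := hsm
        _ = C/K^2 * Z * (K^2 * (n:ℝ)) := by
            rw [hC]
            field_simp
      have hfin : isingProb (A n) β B₀ Ebad ≤ C/K^2 := by
        have h1 := Stmt10Aux.isingProb_le_bound (A n) β B₀ Ebad
          (fun σ => (Rfun (A n) β B₀ (spinVec n σ))^2 * isingWt (A n) β B₀ (spinVec n σ) / (K^2 * n))
          hφ hφ0
        refine h1.trans ?_
        rw [div_le_iff₀ hZpos]
        calc ∑ σ : Fin n → Bool,
              (Rfun (A n) β B₀ (spinVec n σ))^2 * isingWt (A n) β B₀ (spinVec n σ) / (K^2 * n)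
            ≤ (C/K^2) * Z := hsum
        _ = C/K^2 * Z := rfl
      refine hfin.trans ?_
      rw [div_le_iff₀ (by positivity : (0:ℝ) < K^2)]
      linarith [mul_comm (K^2) ε ▸ hKsq]
    have hcb : IsCoboundedUnder (· ≤ ·) atTop (fun n : ℕ => isingProb (A n) β B₀
        {x | ¬ ∃ b : ℝ, Rfun (A n) β b x = 0 ∧
          (∀ b' : ℝ, Rfun (A n) β b' x = 0 → b' = b) ∧
          Real.sqrt n * |b - B₀| ≤ M}) :=
      Filter.isCoboundedUnder_le_of_eventually_le atTop (x := 0) (Eventually.of_forall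
        (fun n => Stmt10Aux.isingProb_nonneg (A n) β B₀ _))
    refine limsup_le_of_le hcb ?_
    filter_upwards [eventually_ge_atTop 1, eventually_ge_atTop (Nat.ceil (M^2))] with n h1 h2
    refine hbound n h1 ?_
    have hMn : M^2 ≤ (n:ℝ) := by
      calc M^2 ≤ (Nat.ceil (M^2) : ℝ) := Nat.le_ceil _
      _ ≤ (n:ℝ) := by exact_mod_cast h2
    calc M ≤ |M| := le_abs_self M
    _ = Real.sqrt (M^2) := (Real.sqrt_sq_eq_abs M).symm
    _ ≤ Real.sqrt n := Real.sqrt_le_sqrt hMn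
end
end
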